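/- arXiv:2408.15434 — 6 statements merged into one kernel-verified Lean document; each statement's English description precedes it below -/
import Mathlib

section
/- Let G be a weighted bipartite graph with non-negative integral edge weights, and let φ(G) denote its unfolding: for each vertex u, create W_u = max_{e∋u} w_e copies u^1,...,u^{W_u}, and for each edge e=(u,v) of weight w_e, create the edges {(u^i, v^{w_e-i+1}) : i ∈ [w_e]}. Then the maximum weight of a matching in G equals the maximum cardinality of a matching in φ(G), i.e. μ_w(G) = μ(φ(G)). -/
open scoped Classical BigOperators

noncomputable section

variable {V : Type*}

/-- A matching: a set of non-loop edges, pairwise vertex-disjoint. -/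
def IsMatching (M : Finset (Sym2 V)) : Prop :=
  (∀ e ∈ M, ¬ e.IsDiag) ∧
    ∀ e ∈ M, ∀ f ∈ M, e ≠ f → ∀ v : V, v ∈ e → v ∉ f

/-- μ(G): maximum cardinality of a matching contained in `G`. -/
def matchNum (G : Finset (Sym2 V)) : ℕ :=
  sSup {k | ∃ M : Finset (Sym2 V), M ⊆ G ∧ IsMatching M ∧ M.card = k}

/-- μ_w(G): maximum weight of a matching contained in `G` (ℕ-valued weights). -/
def matchWeight (G : Finset (Sym2 V)) (w : Sym2 V → ℕ) : ℕ :=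
  sSup {s | ∃ M : Finset (Sym2 V), M ⊆ G ∧ IsMatching M ∧ ∑ e ∈ M, w e = s}

/-- μ_w(G): maximum weight of a matching contained in `G` (ℝ-valued weights). -/
def matchWeightR (G : Finset (Sym2 V)) (w : Sym2 V → ℝ) : ℝ :=
  sSup {s | ∃ M : Finset (Sym2 V), M ⊆ G ∧ IsMatching M ∧ ∑ e ∈ M, w e = s}

/-- Degree of a vertex in an edge set. -/
def deg (H : Finset (Sym2 V)) (v : V) : ℕ := (H.filter fun e => v ∈ e).card

/-- The edge-degree deg_H(u) + deg_H(v) of an edge e = (u,v). -/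
def degSum (H : Finset (Sym2 V)) (e : Sym2 V) : ℕ :=
  deg H e.out.1 + deg H e.out.2

/-- The unfolded copies of a weighted edge e = (u,v):
the edges (u^i, v^{w_e+1-i}) for i ∈ [w_e]. -/
def unfoldEdge (w : Sym2 V → ℕ) (e : Sym2 V) : Finset (Sym2 (V × ℕ)) :=
  (Finset.Icc 1 (w e)).image fun i => s((e.out.1, i), (e.out.2, w e + 1 - i))

/-- The unfolding φ(G) of a weighted graph. -/
def unfoldGraph (G : Finset (Sym2 V)) (w : Sym2 V → ℕ) : Finset (Sym2 (V × ℕ)) :=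
  G.biUnion (unfoldEdge w)

/-- The refolding R(H) ⊆ G of a subgraph H ⊆ φ(G): the weighted edges having
at least one unfolded copy in H. -/
def refold (G : Finset (Sym2 V)) (w : Sym2 V → ℕ)
    (H : Finset (Sym2 (V × ℕ))) : Finset (Sym2 V) :=
  G.filter fun e => ∃ f ∈ unfoldEdge w e, f ∈ H

/-- A bipartite edge set: some side `A` of a bipartition meets every edge exactly once. -/
def IsBipartite (G : Finset (Sym2 V)) : Prop :=
  ∃ A : Set V, ∀ e ∈ G, ∃ u v, e = s(u, v) ∧ u ∈ A ∧ v ∉ A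

-- ## auxiliary

lemma UF.out_mk (e : Sym2 V) : s(e.out.1, e.out.2) = e := by
  exact Quot.out_eq e

lemma UF.mem_iff_out {v : V} {e : Sym2 V} : v ∈ e ↔ v = e.out.1 ∨ v = e.out.2 := by
  conv_lhs => rw [← UF.out_mk e]
  exact Sym2.mem_iff

lemma UF.isDiag_iff {e : Sym2 V} : e.IsDiag ↔ e.out.1 = e.out.2 := by
  conv_lhs => rw [← UF.out_mk e]
  exact Sym2.mk_isDiag_iff

def UFverts (G : Finset (Sym2 V)) : Finset V := G.biUnion fun e => {e.out.1, e.out.2}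

lemma UF.mem_verts {G : Finset (Sym2 V)} {v : V} : v ∈ UFverts G ↔ ∃ e ∈ G, v ∈ e := by
  simp only [UFverts, Finset.mem_biUnion, Finset.mem_insert, Finset.mem_singleton]
  exact exists_congr fun e => and_congr_right fun _ => UF.mem_iff_out.symm

lemma UF.mem_unfoldEdge {w : Sym2 V → ℕ} {e : Sym2 V} {x : Sym2 (V × ℕ)} :
    x ∈ unfoldEdge w e ↔
      ∃ i, 1 ≤ i ∧ i ≤ w e ∧ x = s((e.out.1, i), (e.out.2, w e + 1 - i)) := by
  simp only [unfoldEdge, Finset.mem_image, Finset.mem_Icc]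
  constructor
  · rintro ⟨i, ⟨h1, h2⟩, rfl⟩; exact ⟨i, h1, h2, rfl⟩
  · rintro ⟨i, h1, h2, rfl⟩; exact ⟨i, ⟨h1, h2⟩, rfl⟩

lemma UF.unfold_vertex {w : Sym2 V → ℕ} {e : Sym2 V} {x : Sym2 (V × ℕ)}
    (hx : x ∈ unfoldEdge w e) {z : V} {k : ℕ} (hzk : (z, k) ∈ x) :
    z ∈ e ∧ 1 ≤ k ∧ k ≤ w e := by
  obtain ⟨i, h1, h2, rfl⟩ := UF.mem_unfoldEdge.1 hx
  rw [Sym2.mem_iff] at hzk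
  rcases hzk with h | h <;> rw [Prod.mk.injEq] at h <;> obtain ⟨hz, hk⟩ := h <;> subst hz <;>
    subst hk
  · exact ⟨UF.mem_iff_out.2 (Or.inl rfl), h1, h2⟩
  · exact ⟨UF.mem_iff_out.2 (Or.inr rfl), by omega, by omega⟩

lemma UF.copy_inj {w : Sym2 V → ℕ} {e : Sym2 V} (hd : ¬ e.IsDiag) {i j : ℕ}
    (h : s((e.out.1, i), (e.out.2, w e + 1 - i)) = s((e.out.1, j), (e.out.2, w e + 1 - j))) :
    i = j := by
  rw [Sym2.eq_iff] at h
  rcases h with ⟨h1, _⟩ | ⟨h1, _⟩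
  · exact (Prod.mk.injEq _ _ _ _ ▸ h1).2
  · exact absurd (Prod.mk.injEq _ _ _ _ ▸ h1).1 (UF.isDiag_iff.not.1 hd)

lemma UF.card_unfoldEdge {w : Sym2 V → ℕ} {e : Sym2 V} (hd : ¬ e.IsDiag) :
    (unfoldEdge w e).card = w e := by
  rw [unfoldEdge, Finset.card_image_of_injOn fun i _ j _ h => UF.copy_inj hd h, Nat.card_Icc]
  omega

/-- Easy direction: unfolding a matching of `G` gives a matching of `φ(G)` whose
cardinality is the weight. -/
lemma UF.unfold_matching {G : Finset (Sym2 V)} {w : Sym2 V → ℕ}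
    (hG : ∀ e ∈ G, ¬ e.IsDiag)
    {M : Finset (Sym2 V)} (hMG : M ⊆ G) (hM : IsMatching M) :
    ∃ N : Finset (Sym2 (V × ℕ)), N ⊆ unfoldGraph G w ∧ IsMatching N ∧
      N.card = ∑ e ∈ M, w e := by
  -- distinct edges of M have vertex-disjoint unfoldings
  have key : ∀ e ∈ M, ∀ f ∈ M, e ≠ f → ∀ x ∈ unfoldEdge w e, ∀ x' ∈ unfoldEdge w f,
      ∀ p : V × ℕ, p ∈ x → p ∉ x' := by
    intro e he f hf hef x hx x' hx' p hp hp'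
    obtain ⟨z, k⟩ := p
    exact hM.2 e he f hf hef z (UF.unfold_vertex hx hp).1 (UF.unfold_vertex hx' hp').1
  have hdisj : ∀ e ∈ M, ∀ f ∈ M, e ≠ f → Disjoint (unfoldEdge w e) (unfoldEdge w f) := by
    intro e he f hf hef
    rw [Finset.disjoint_left]
    intro x hx hx'
    obtain ⟨i, h1, h2, rfl⟩ := UF.mem_unfoldEdge.1 hx
    exact key e he f hf hef _ hx _ hx' _ (Sym2.mem_mk_left _ _) (Sym2.mem_mk_left _ _)
  refine ⟨M.biUnion (unfoldEdge w), ?_, ⟨?_, ?_⟩, ?_⟩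
  · intro x hx
    obtain ⟨e, he, hxe⟩ := Finset.mem_biUnion.1 hx
    exact Finset.mem_biUnion.2 ⟨e, hMG he, hxe⟩
  · intro x hx
    obtain ⟨e, he, hxe⟩ := Finset.mem_biUnion.1 hx
    obtain ⟨i, h1, h2, rfl⟩ := UF.mem_unfoldEdge.1 hxe
    rw [Sym2.mk_isDiag_iff, Prod.mk.injEq]
    rintro ⟨h, -⟩
    exact UF.isDiag_iff.not.1 (hG e (hMG he)) h
  · intro x hx x' hx' hne p hp hp'
    obtain ⟨e, he, hxe⟩ := Finset.mem_biUnion.1 hx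
    obtain ⟨f, hf, hxf⟩ := Finset.mem_biUnion.1 hx'
    by_cases hef : e = f
    · subst hef
      obtain ⟨i, h1, h2, rfl⟩ := UF.mem_unfoldEdge.1 hxe
      obtain ⟨j, h1', h2', rfl⟩ := UF.mem_unfoldEdge.1 hxf
      have hij : i ≠ j := fun h => hne (by rw [h])
      have hdg := UF.isDiag_iff.not.1 (hG e (hMG he))
      rw [Sym2.mem_iff] at hp hp'
      rcases hp with h | h <;> rcases hp' with h' | h' <;> rw [h] at h' <;>
        rw [Prod.mk.injEq] at h'
      · exact hij h'.2
      · exact hdg h'.1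
      · exact hdg h'.1.symm
      · omega
    · exact key e he f hf hef x hxe x' hxf p hp hp'
  · rw [Finset.card_biUnion hdisj]
    exact Finset.sum_congr rfl fun e he => UF.card_unfoldEdge (hG e (hMG he))

/-- Any matching of `φ(G)` is at most the total weight of a fractional... integral cover. -/
lemma UF.matching_le_cover {G : Finset (Sym2 V)} {w : Sym2 V → ℕ} (y : V → ℕ)
    (hy : ∀ e ∈ G, w e ≤ y e.out.1 + y e.out.2)
    {N : Finset (Sym2 (V × ℕ))} (hN : N ⊆ unfoldGraph G w) (hm : IsMatching N) :
    N.card ≤ ∑ v ∈ UFverts G, y v := by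
  set CC : Finset (V × ℕ) :=
    (UFverts G).biUnion (fun u => (Finset.Icc 1 (y u)).image fun i => (u, i)) with hCC
  have hCCcard : CC.card = ∑ v ∈ UFverts G, y v := by
    rw [hCC, Finset.card_biUnion]
    · refine Finset.sum_congr rfl fun u _ => ?_
      rw [Finset.card_image_of_injOn fun i _ j _ h => (Prod.mk.injEq _ _ _ _ ▸ h).2,
        Nat.card_Icc]
      omega
    · intro u _ u' _ huu'
      rw [Function.onFun, Finset.disjoint_left]
      rintro ⟨z, k⟩ hz hz'
      simp only [Finset.mem_image, Finset.mem_Icc, Prod.mk.injEq] at hz hz'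
      obtain ⟨i, _, hi2, -⟩ := hz
      obtain ⟨j, _, hj2, -⟩ := hz'
      exact huu' (hi2.trans hj2.symm)
  have key : ∀ x : Sym2 (V × ℕ), ∃ p : V × ℕ, x ∈ N → p ∈ CC ∧ p ∈ x := by
    intro x
    by_cases hx : x ∈ N
    · obtain ⟨e, heG, hxe⟩ := Finset.mem_biUnion.1 (hN hx)
      obtain ⟨i, h1, h2, rfl⟩ := UF.mem_unfoldEdge.1 hxe
      have hcov := hy e heG
      by_cases hi : i ≤ y e.out.1
      · refine ⟨(e.out.1, i), fun _ => ⟨?_, Sym2.mem_mk_left _ _⟩⟩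
        refine Finset.mem_biUnion.2 ⟨e.out.1, UF.mem_verts.2 ⟨e, heG, ?_⟩, ?_⟩
        · exact UF.mem_iff_out.2 (Or.inl rfl)
        · exact Finset.mem_image.2 ⟨i, Finset.mem_Icc.2 ⟨h1, hi⟩, rfl⟩
      · refine ⟨(e.out.2, w e + 1 - i), fun _ => ⟨?_, Sym2.mem_mk_right _ _⟩⟩
        refine Finset.mem_biUnion.2 ⟨e.out.2, UF.mem_verts.2 ⟨e, heG, ?_⟩, ?_⟩
        · exact UF.mem_iff_out.2 (Or.inr rfl)
        · exact Finset.mem_image.2 ⟨w e + 1 - i, Finset.mem_Icc.2 ⟨by omega, by omega⟩, rfl⟩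
    · exact ⟨x.out.1, fun h => absurd h hx⟩
  choose c hc using key
  rw [← hCCcard]
  refine Finset.card_le_card_of_injOn c (fun x hx => (hc x hx).1) ?_
  intro x hx x' hx' hcc
  by_contra hne
  exact hm.2 x hx x' hx' hne (c x) (hc x hx).2 (hcc ▸ (hc x' hx').2)


-- ## Mendelsohn–Dulmage chains

inductive MDChain (X Y : Finset V) (F Gg : V → V) : V → Prop
  | base (a : V) : a ∈ X → (∀ b ∈ Y, Gg b ≠ a) → MDChain X Y F Gg a
  | step (a : V) : MDChain X Y F Gg a → a ∈ X → F a ∈ Y → MDChain X Y F Gg (Gg (F a))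

lemma MDChain.inv {X Y : Finset V} {F Gg : V → V} {v : V} (h : MDChain X Y F Gg v) :
    (v ∈ X ∧ ∀ b ∈ Y, Gg b ≠ v) ∨
      ∃ a, MDChain X Y F Gg a ∧ a ∈ X ∧ F a ∈ Y ∧ Gg (F a) = v := by
  cases h with
  | base a h1 h2 => exact Or.inl ⟨h1, h2⟩
  | step a hc h1 h2 => exact Or.inr ⟨a, hc, h1, h2, rfl⟩

-- ## Hall's condition for a minimal cover on one side

lemma UF.hall_side {G : Finset (Sym2 V)} {w : Sym2 V → ℕ}
    (av bv : Sym2 V → V) (side : V → Prop) (y : V → ℕ)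
    (hsplit : ∀ e ∈ G, e = s(av e, bv e))
    (hsides : ∀ e ∈ G, side (av e) ∧ ¬ side (bv e))
    (hcov : ∀ e ∈ G, w e ≤ y (av e) + y (bv e))
    (hmin : ∀ y' : V → ℕ, (∀ e ∈ G, w e ≤ y' (av e) + y' (bv e)) →
      ∑ v ∈ UFverts G, y v ≤ ∑ v ∈ UFverts G, y' v)
    (T : Finset V) (hT : ∀ v ∈ T, v ∈ UFverts G ∧ side v ∧ 0 < y v) :
    T.card ≤ (T.biUnion fun a =>
      (G.filter fun e => w e = y (av e) + y (bv e) ∧ av e = a).image bv).card := by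
  by_contra hlt
  push_neg at hlt
  set NT := T.biUnion (fun a =>
    (G.filter fun e => w e = y (av e) + y (bv e) ∧ av e = a).image bv) with hNTdef
  have hTfacts := hT
  have hNTfacts : ∀ v ∈ NT, v ∈ UFverts G ∧ ¬ side v := by
    intro v hv
    rw [hNTdef, Finset.mem_biUnion] at hv
    obtain ⟨a, _, hv⟩ := hv
    rw [Finset.mem_image] at hv
    obtain ⟨e, he, rfl⟩ := hv
    rw [Finset.mem_filter] at he
    refine ⟨UF.mem_verts.2 ⟨e, he.1, ?_⟩, (hsides e he.1).2⟩
    have h5 : bv e ∈ s(av e, bv e) := Sym2.mem_mk_right _ _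
    rwa [← hsplit e he.1] at h5
  set y' : V → ℕ := fun v => if v ∈ T then y v - 1 else if v ∈ NT then y v + 1 else y v
    with hy'
  have hcov' : ∀ e ∈ G, w e ≤ y' (av e) + y' (bv e) := by
    intro e heG
    have hbvT : bv e ∉ T := fun h => (hsides e heG).2 (hTfacts _ h).2.1
    have h1 := hcov e heG
    by_cases haT : av e ∈ T
    · have hy1 : 0 < y (av e) := (hTfacts _ haT).2.2
      have hav' : y' (av e) = y (av e) - 1 := by simp only [hy', if_pos haT]
      by_cases ht : w e = y (av e) + y (bv e)
      · have hbNT : bv e ∈ NT := by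
          rw [hNTdef, Finset.mem_biUnion]
          exact ⟨av e, haT, Finset.mem_image.2 ⟨e, Finset.mem_filter.2 ⟨heG, ht, rfl⟩, rfl⟩⟩
        have hbv' : y' (bv e) = y (bv e) + 1 := by simp only [hy', if_neg hbvT, if_pos hbNT]
        omega
      · have hbv' : y (bv e) ≤ y' (bv e) := by
          simp only [hy', if_neg hbvT]; split_ifs <;> omega
        omega
    · have hav' : y (av e) ≤ y' (av e) := by
        simp only [hy', if_neg haT]; split_ifs <;> omega
      have hbv' : y (bv e) ≤ y' (bv e) := by
        simp only [hy', if_neg hbvT]; split_ifs <;> omega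
      omega
  have hTdisjNT : ∀ v ∈ T, v ∉ NT := fun v hv hv' => (hNTfacts v hv').2 (hTfacts v hv).2.1
  have count : ∀ S : Finset V, S ⊆ UFverts G →
      ∑ v ∈ UFverts G, (if v ∈ S then (1 : ℕ) else 0) = S.card := by
    intro S hS
    rw [← Finset.sum_filter, Finset.filter_mem_eq_inter, Finset.inter_eq_right.2 hS,
      Finset.sum_const, smul_eq_mul, mul_one]
  have hTsub : T ⊆ UFverts G := fun v hv => (hTfacts v hv).1
  have hNTsub : NT ⊆ UFverts G := fun v hv => (hNTfacts v hv).1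
  have hsum : ∑ v ∈ UFverts G, y' v + T.card = ∑ v ∈ UFverts G, y v + NT.card := by
    rw [← count T hTsub, ← count NT hNTsub, ← Finset.sum_add_distrib,
      ← Finset.sum_add_distrib]
    refine Finset.sum_congr rfl fun v hv => ?_
    by_cases h1 : v ∈ T
    · have h2 := hTdisjNT v h1
      have h3 := (hTfacts v h1).2.2
      simp only [hy', if_pos h1, if_neg h2]
      omega
    · by_cases h2 : v ∈ NT
      · simp only [hy', if_neg h1, if_pos h2]; try omega
      · simp only [hy', if_neg h1, if_neg h2]; try omega
  have := hmin y' hcov'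
  omega


private lemma UF.harith {a b c d p q : ℕ} (h1 : p ≤ c) (h2 : q ≤ b) :
    (a + p) + (q + d) ≤ (a + b) + (c + d) := by omega

/-- Egerváry's theorem, in the form needed here: there is an integral vertex cover
whose total value is at most the weight of some matching of `G`. -/
lemma UF.egervary {G : Finset (Sym2 V)} {w : Sym2 V → ℕ}
    (hG : ∀ e ∈ G, ¬ e.IsDiag) (hbip : IsBipartite G) :
    ∃ y : V → ℕ, (∀ e ∈ G, w e ≤ y e.out.1 + y e.out.2) ∧
      ∃ M : Finset (Sym2 V), M ⊆ G ∧ IsMatching M ∧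
        ∑ v ∈ UFverts G, y v ≤ ∑ e ∈ M, w e := by
  classical
  obtain ⟨A, hA⟩ := hbip
  set av : Sym2 V → V := fun e => if e.out.1 ∈ A then e.out.1 else e.out.2 with hav_def
  set bv : Sym2 V → V := fun e => if e.out.1 ∈ A then e.out.2 else e.out.1 with hbv_def
  have hyab : ∀ (y : V → ℕ) (e : Sym2 V), y (av e) + y (bv e) = y e.out.1 + y e.out.2 := by
    intro y e
    simp only [hav_def, hbv_def]
    split_ifs <;> omega
  have havbv : ∀ e ∈ G, av e ∈ A ∧ bv e ∉ A ∧ e = s(av e, bv e) := by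
    intro e heG
    obtain ⟨u, v, he, hu, hv⟩ := hA e heG
    have h2 : s(e.out.1, e.out.2) = s(u, v) := by rw [UF.out_mk]; exact he
    rw [Sym2.eq_iff] at h2
    rcases h2 with ⟨h3, h4⟩ | ⟨h3, h4⟩
    · have hm : e.out.1 ∈ A := by rw [h3]; exact hu
      have hm2 : e.out.2 ∉ A := by rw [h4]; exact hv
      simp only [hav_def, hbv_def, if_pos hm]
      exact ⟨hm, hm2, (UF.out_mk e).symm⟩
    · have hm : e.out.1 ∉ A := by rw [h3]; exact hv
      have hm2 : e.out.2 ∈ A := by rw [h4]; exact hu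
      simp only [hav_def, hbv_def, if_neg hm]
      exact ⟨hm2, hm, by rw [Sym2.eq_swap]; exact (UF.out_mk e).symm⟩
  -- a minimal cover
  have hSne : {s | ∃ y : V → ℕ, (∀ e ∈ G, w e ≤ y (av e) + y (bv e)) ∧
      ∑ v ∈ UFverts G, y v = s}.Nonempty := by
    refine ⟨_, fun _ => ∑ e ∈ G, w e, fun e heG => ?_, rfl⟩
    have h1 : w e ≤ ∑ e ∈ G, w e := Finset.single_le_sum (fun _ _ => Nat.zero_le _) heG
    exact le_trans h1 (Nat.le_add_right _ _)
  obtain ⟨y, hcov, hysum⟩ := Nat.sInf_mem hSne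
  have hmin : ∀ y' : V → ℕ, (∀ e ∈ G, w e ≤ y' (av e) + y' (bv e)) →
      ∑ v ∈ UFverts G, y v ≤ ∑ v ∈ UFverts G, y' v := by
    intro y' h
    rw [hysum]
    exact Nat.sInf_le ⟨y', h, rfl⟩
  set PA := (UFverts G).filter (fun v => v ∈ A ∧ 0 < y v) with hPAdef
  set PB := (UFverts G).filter (fun v => v ∉ A ∧ 0 < y v) with hPBdef
  have hPAfacts : ∀ v ∈ PA, v ∈ A ∧ 0 < y v := by
    intro v hv; rw [hPAdef, Finset.mem_filter] at hv; exact hv.2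
  have hPBfacts : ∀ v ∈ PB, v ∉ A ∧ 0 < y v := by
    intro v hv; rw [hPBdef, Finset.mem_filter] at hv; exact hv.2
  -- Hall's condition on the A side, and the matching function F
  have hallA := UF.hall_side av bv (fun v => v ∈ A) y (fun e he => (havbv e he).2.2)
    (fun e he => ⟨(havbv e he).1, (havbv e he).2.1⟩) hcov hmin
  have hallA' : ∀ s : Finset {x // x ∈ PA}, s.card ≤ (s.biUnion fun a =>
      (G.filter fun e => w e = y (av e) + y (bv e) ∧ av e = a.1).image bv).card := by
    intro s
    have h2 : s.biUnion (fun a =>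
          (G.filter fun e => w e = y (av e) + y (bv e) ∧ av e = a.1).image bv)
        = (s.image Subtype.val).biUnion (fun a =>
          (G.filter fun e => w e = y (av e) + y (bv e) ∧ av e = a).image bv) := by
      ext v
      simp only [Finset.mem_biUnion, Finset.mem_image]
      constructor
      · rintro ⟨a, ha, hv⟩; exact ⟨a.1, ⟨a, ha, rfl⟩, hv⟩
      · rintro ⟨x, ⟨a, ha, rfl⟩, hv⟩; exact ⟨a, ha, hv⟩
    rw [h2, ← Finset.card_image_of_injective s Subtype.val_injective]
    refine hallA _ ?_
    intro v hv
    obtain ⟨a, _, rfl⟩ := Finset.mem_image.1 hv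
    obtain ⟨v0, hv0⟩ := a
    rw [hPAdef] at hv0
    rw [Finset.mem_filter] at hv0
    exact ⟨hv0.1, hv0.2.1, hv0.2.2⟩
  obtain ⟨fA, hfAinj, hfA⟩ :=
    (Finset.all_card_le_biUnion_card_iff_exists_injective _).1 hallA'
  set F : V → V := fun v => if h : v ∈ PA then fA ⟨v, h⟩ else v with hFdef
  have hFval : ∀ a (ha : a ∈ PA), F a = fA ⟨a, ha⟩ := by
    intro a ha; simp only [hFdef, dif_pos ha]
  have hFinj : ∀ a ∈ PA, ∀ a' ∈ PA, F a = F a' → a = a' := by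
    intro a ha a' ha' h
    rw [hFval a ha, hFval a' ha'] at h
    exact congrArg Subtype.val (hfAinj h)
  have propF : ∀ a ∈ PA, s(a, F a) ∈ G ∧ w (s(a, F a)) = y a + y (F a) ∧ F a ∉ A := by
    intro a ha
    have h := hfA ⟨a, ha⟩
    rw [Finset.mem_image] at h
    obtain ⟨e, he, hbe⟩ := h
    rw [Finset.mem_filter] at he
    obtain ⟨heG, ht, hae⟩ := he
    have hae' : av e = a := hae
    have hbF : bv e = F a := by rw [hFval a ha]; exact hbe
    have hEe : s(a, F a) = e := by
      have h6 := (havbv e heG).2.2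
      rw [hae', hbF] at h6
      exact h6.symm
    refine ⟨by rw [hEe]; exact heG, ?_, ?_⟩
    · rw [hEe, ht, hae', hbF]
    · have := (havbv e heG).2.1; rwa [hbF] at this
  -- Hall's condition on the B side, and the matching function Gg
  have hallB := UF.hall_side (G := G) (w := w) bv av (fun v => v ∉ A) y
    (fun e he => by rw [Sym2.eq_swap]; exact (havbv e he).2.2)
    (fun e he => ⟨(havbv e he).2.1, fun hc => hc (havbv e he).1⟩)
    (fun e he => le_trans (hcov e he) (le_of_eq (Nat.add_comm _ _)))
    (fun y' h => hmin y' (fun e he => le_trans (h e he) (le_of_eq (Nat.add_comm _ _))))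
  have hallB' : ∀ s : Finset {x // x ∈ PB}, s.card ≤ (s.biUnion fun b =>
      (G.filter fun e => w e = y (bv e) + y (av e) ∧ bv e = b.1).image av).card := by
    intro s
    have h2 : s.biUnion (fun b =>
          (G.filter fun e => w e = y (bv e) + y (av e) ∧ bv e = b.1).image av)
        = (s.image Subtype.val).biUnion (fun b =>
          (G.filter fun e => w e = y (bv e) + y (av e) ∧ bv e = b).image av) := by
      ext v
      simp only [Finset.mem_biUnion, Finset.mem_image]
      constructor
      · rintro ⟨b, hb, hv⟩; exact ⟨b.1, ⟨b, hb, rfl⟩, hv⟩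
      · rintro ⟨x, ⟨b, hb, rfl⟩, hv⟩; exact ⟨b, hb, hv⟩
    rw [h2, ← Finset.card_image_of_injective s Subtype.val_injective]
    refine hallB _ ?_
    intro v hv
    obtain ⟨b, _, rfl⟩ := Finset.mem_image.1 hv
    obtain ⟨v0, hv0⟩ := b
    rw [hPBdef] at hv0
    rw [Finset.mem_filter] at hv0
    exact ⟨hv0.1, hv0.2.1, hv0.2.2⟩
  obtain ⟨fB, hfBinj, hfB⟩ :=
    (Finset.all_card_le_biUnion_card_iff_exists_injective _).1 hallB'
  set Gg : V → V := fun v => if h : v ∈ PB then fB ⟨v, h⟩ else v with hGdef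
  have hGval : ∀ b (hb : b ∈ PB), Gg b = fB ⟨b, hb⟩ := by
    intro b hb; simp only [hGdef, dif_pos hb]
  have hGginj : ∀ b ∈ PB, ∀ b' ∈ PB, Gg b = Gg b' → b = b' := by
    intro b hb b' hb' h
    rw [hGval b hb, hGval b' hb'] at h
    exact congrArg Subtype.val (hfBinj h)
  have propG : ∀ b ∈ PB, s(Gg b, b) ∈ G ∧ w (s(Gg b, b)) = y (Gg b) + y b ∧ Gg b ∈ A := by
    intro b hb
    have h := hfB ⟨b, hb⟩
    rw [Finset.mem_image] at h
    obtain ⟨e, he, hae⟩ := h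
    rw [Finset.mem_filter] at he
    obtain ⟨heG, ht, hbe⟩ := he
    have hbe' : bv e = b := hbe
    have haG : av e = Gg b := by rw [hGval b hb]; exact hae
    have hEe : s(Gg b, b) = e := by
      have h6 := (havbv e heG).2.2
      rw [haG, hbe'] at h6
      exact h6.symm
    refine ⟨by rw [hEe]; exact heG, ?_, ?_⟩
    · rw [hEe, ht, hbe', haG]; exact Nat.add_comm _ _
    · have := (havbv e heG).1; rwa [haG] at this
  -- the Mendelsohn–Dulmage matching
  set XC := PA.filter (fun a => MDChain PA PB F Gg a) with hXCdef
  set YC := PB.filter (fun b => ¬ MDChain PA PB F Gg (Gg b)) with hYCdef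
  have hXCfacts : ∀ a ∈ XC, a ∈ PA ∧ MDChain PA PB F Gg a := by
    intro a ha; rw [hXCdef, Finset.mem_filter] at ha; exact ha
  have hYCfacts : ∀ b ∈ YC, b ∈ PB ∧ ¬ MDChain PA PB F Gg (Gg b) := by
    intro b hb; rw [hYCdef, Finset.mem_filter] at hb; exact hb
  set M := XC.image (fun a => s(a, F a)) ∪ YC.image (fun b => s(Gg b, b)) with hMdef
  -- no shared vertices between distinct chosen edges
  have noFFv : ∀ a ∈ XC, ∀ a' ∈ XC, a ≠ a' →
      ∀ v, v ∈ s(a, F a) → v ∈ s(a', F a') → False := by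
    intro a ha a' ha' hne v hv hv'
    have haPA := (hXCfacts a ha).1
    have ha'PA := (hXCfacts a' ha').1
    rw [Sym2.mem_iff] at hv hv'
    rcases hv with h1 | h1 <;> rcases hv' with h2 | h2
    · exact hne (h1.symm.trans h2)
    · exact (propF a' ha'PA).2.2
        (by rw [← (h1.symm.trans h2)]; exact (hPAfacts a haPA).1)
    · exact (propF a haPA).2.2
        (by rw [h1.symm.trans h2]; exact (hPAfacts a' ha'PA).1)
    · exact hne (hFinj a haPA a' ha'PA (h1.symm.trans h2))
  have noGGv : ∀ b ∈ YC, ∀ b' ∈ YC, b ≠ b' →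
      ∀ v, v ∈ s(Gg b, b) → v ∈ s(Gg b', b') → False := by
    intro b hb b' hb' hne v hv hv'
    have hbPB := (hYCfacts b hb).1
    have hb'PB := (hYCfacts b' hb').1
    rw [Sym2.mem_iff] at hv hv'
    rcases hv with h1 | h1 <;> rcases hv' with h2 | h2
    · exact hne (hGginj b hbPB b' hb'PB (h1.symm.trans h2))
    · exact (hPBfacts b' hb'PB).1
        (by rw [← (h1.symm.trans h2)]; exact (propG b hbPB).2.2)
    · exact (hPBfacts b hbPB).1
        (by rw [h1.symm.trans h2]; exact (propG b' hb'PB).2.2)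
    · exact hne (h1.symm.trans h2)
  have noFG : ∀ a ∈ XC, ∀ b ∈ YC, ∀ v, v ∈ s(a, F a) → v ∈ s(Gg b, b) → False := by
    intro a ha b hb v hv hv'
    obtain ⟨haPA, haC⟩ := hXCfacts a ha
    obtain ⟨hbPB, hbnC⟩ := hYCfacts b hb
    rw [Sym2.mem_iff] at hv hv'
    rcases hv with h1 | h1
    · rcases hv' with h2 | h2
      · have h3 : a = Gg b := h1.symm.trans h2
        rw [h3] at haC
        exact hbnC haC
      · exact (hPBfacts b hbPB).1
          (by rw [← (h1.symm.trans h2)]; exact (hPAfacts a haPA).1)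
    · rcases hv' with h2 | h2
      · exact (propF a haPA).2.2
          (by rw [h1.symm.trans h2]; exact (propG b hbPB).2.2)
      · have h3 : F a = b := h1.symm.trans h2
        have hstep := MDChain.step a haC haPA (by rw [h3]; exact hbPB)
        rw [h3] at hstep
        exact hbnC hstep
  have himgdisj : Disjoint (XC.image (fun a => s(a, F a))) (YC.image (fun b => s(Gg b, b))) := by
    rw [Finset.disjoint_left]
    intro x hx hx'
    obtain ⟨a, ha, rfl⟩ := Finset.mem_image.1 hx
    obtain ⟨b, hb, hEq⟩ := Finset.mem_image.1 hx'
    exact noFG a ha b hb a (Sym2.mem_mk_left _ _) (by rw [hEq]; exact Sym2.mem_mk_left _ _)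
  have hMG : M ⊆ G := by
    intro x hx
    rcases Finset.mem_union.1 hx with h | h
    · obtain ⟨a, ha, rfl⟩ := Finset.mem_image.1 h
      exact (propF a (hXCfacts a ha).1).1
    · obtain ⟨b, hb, rfl⟩ := Finset.mem_image.1 h
      exact (propG b (hYCfacts b hb).1).1
  have hMm : IsMatching M := by
    constructor
    · intro e he
      rcases Finset.mem_union.1 he with h | h
      · obtain ⟨a, ha, rfl⟩ := Finset.mem_image.1 h
        rw [Sym2.mk_isDiag_iff]
        intro hd
        exact (propF a (hXCfacts a ha).1).2.2
          (by rw [← hd]; exact (hPAfacts a (hXCfacts a ha).1).1)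
      · obtain ⟨b, hb, rfl⟩ := Finset.mem_image.1 h
        rw [Sym2.mk_isDiag_iff]
        intro hd
        exact (hPBfacts b (hYCfacts b hb).1).1
          (by rw [← hd]; exact (propG b (hYCfacts b hb).1).2.2)
    · intro x hx x' hx' hne v hv hv'
      rcases Finset.mem_union.1 hx with h | h <;> rcases Finset.mem_union.1 hx' with h' | h'
      · obtain ⟨a, ha, rfl⟩ := Finset.mem_image.1 h
        obtain ⟨a', ha', rfl⟩ := Finset.mem_image.1 h'
        by_cases haa : a = a'
        · exact hne (by rw [haa])
        · exact noFFv a ha a' ha' haa v hv hv'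
      · obtain ⟨a, ha, rfl⟩ := Finset.mem_image.1 h
        obtain ⟨b, hb, rfl⟩ := Finset.mem_image.1 h'
        exact noFG a ha b hb v hv hv'
      · obtain ⟨b, hb, rfl⟩ := Finset.mem_image.1 h
        obtain ⟨a, ha, rfl⟩ := Finset.mem_image.1 h'
        exact noFG a ha b hb v hv' hv
      · obtain ⟨b, hb, rfl⟩ := Finset.mem_image.1 h
        obtain ⟨b', hb', rfl⟩ := Finset.mem_image.1 h'
        by_cases hbb : b = b'
        · exact hne (by rw [hbb])
        · exact noGGv b hb b' hb' hbb v hv hv'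
  -- the weight of M
  have hinjF : ∀ a ∈ XC, ∀ a' ∈ XC, s(a, F a) = s(a', F a') → a = a' := by
    intro a ha a' ha' h
    by_contra hne
    exact noFFv a ha a' ha' hne a (Sym2.mem_mk_left _ _)
      (by rw [← h]; exact Sym2.mem_mk_left _ _)
  have hinjG : ∀ b ∈ YC, ∀ b' ∈ YC, s(Gg b, b) = s(Gg b', b') → b = b' := by
    intro b hb b' hb' h
    by_contra hne
    exact noGGv b hb b' hb' hne (Gg b) (Sym2.mem_mk_left _ _)
      (by rw [← h]; exact Sym2.mem_mk_left _ _)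
  have hMsum : ∑ e ∈ M, w e =
      (∑ a ∈ XC, y a + ∑ a ∈ XC, y (F a)) + (∑ b ∈ YC, y (Gg b) + ∑ b ∈ YC, y b) := by
    rw [hMdef, Finset.sum_union himgdisj, Finset.sum_image hinjF, Finset.sum_image hinjG,
      Finset.sum_congr rfl (fun a ha => (propF a (hXCfacts a ha).1).2.1),
      Finset.sum_congr rfl (fun b hb => (propG b (hYCfacts b hb).1).2.1),
      Finset.sum_add_distrib, Finset.sum_add_distrib]
  -- the total value of the cover
  have hPAPBdisj : Disjoint PA PB := by
    rw [Finset.disjoint_left]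
    intro v hv hv'
    exact (hPBfacts v hv').1 (hPAfacts v hv).1
  have htot : ∑ v ∈ UFverts G, y v = ∑ v ∈ PA, y v + ∑ v ∈ PB, y v := by
    rw [← Finset.sum_union hPAPBdisj]
    refine (Finset.sum_subset (Finset.union_subset (Finset.filter_subset _ _)
      (Finset.filter_subset _ _)) ?_).symm
    intro v hv hnv
    by_contra h0
    have hpos : 0 < y v := Nat.pos_of_ne_zero h0
    rcases Classical.em (v ∈ A) with hA' | hA'
    · exact hnv (Finset.mem_union.2 (Or.inl (Finset.mem_filter.2 ⟨hv, hA', hpos⟩)))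
    · exact hnv (Finset.mem_union.2 (Or.inr (Finset.mem_filter.2 ⟨hv, hA', hpos⟩)))
  have hPAsplit : ∑ v ∈ PA, y v = ∑ a ∈ XC, y a +
      ∑ a ∈ PA.filter (fun a => ¬ MDChain PA PB F Gg a), y a :=
    (Finset.sum_filter_add_sum_filter_not PA _ y).symm
  have hPBsplit : ∑ v ∈ PB, y v =
      ∑ b ∈ PB.filter (fun b => MDChain PA PB F Gg (Gg b)), y b + ∑ b ∈ YC, y b :=
    (Finset.sum_filter_add_sum_filter_not PB _ y).symm
  have hcovA : PA.filter (fun a => ¬ MDChain PA PB F Gg a) ⊆ YC.image Gg := by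
    intro v hv
    rw [Finset.mem_filter] at hv
    obtain ⟨hvPA, hvnC⟩ := hv
    have hex : ∃ b ∈ PB, Gg b = v := by
      by_contra hne
      push_neg at hne
      exact hvnC (MDChain.base v hvPA hne)
    obtain ⟨b, hb, hgb⟩ := hex
    refine Finset.mem_image.2 ⟨b, ?_, hgb⟩
    rw [hYCdef, Finset.mem_filter]
    exact ⟨hb, by rw [hgb]; exact hvnC⟩
  have hcovB : PB.filter (fun b => MDChain PA PB F Gg (Gg b)) ⊆ XC.image F := by
    intro v hv
    rw [Finset.mem_filter] at hv
    obtain ⟨hvPB, hvC⟩ := hv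
    rcases MDChain.inv hvC with ⟨h1, h2⟩ | ⟨a, hc, haX, hFaY, heq⟩
    · exact absurd rfl (h2 v hvPB)
    · have hFv : F a = v := hGginj (F a) hFaY v hvPB heq
      exact Finset.mem_image.2 ⟨a, by rw [hXCdef, Finset.mem_filter]; exact ⟨haX, hc⟩, hFv⟩
  have hbA : ∑ a ∈ PA.filter (fun a => ¬ MDChain PA PB F Gg a), y a ≤
      ∑ b ∈ YC, y (Gg b) := by
    rw [← Finset.sum_image (fun b hb b' hb' h =>
      hGginj b (hYCfacts b hb).1 b' (hYCfacts b' hb').1 h)]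
    exact Finset.sum_le_sum_of_subset hcovA
  have hbB : ∑ b ∈ PB.filter (fun b => MDChain PA PB F Gg (Gg b)), y b ≤
      ∑ a ∈ XC, y (F a) := by
    rw [← Finset.sum_image (fun a ha a' ha' h =>
      hFinj a (hXCfacts a ha).1 a' (hXCfacts a' ha').1 h)]
    exact Finset.sum_le_sum_of_subset hcovB
  refine ⟨y, fun e he => by rw [← hyab y e]; exact hcov e he, M, hMG, hMm, ?_⟩
  rw [htot, hPAsplit, hPBsplit, hMsum]
  exact UF.harith hbA hbB

/-- For a weighted bipartite graph `G` with positive integral weights,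
the maximum matching weight of `G` equals the maximum matching cardinality of its
unfolding φ(G). -/
theorem unfolding_preserves_matching_weight
    (G : Finset (Sym2 V)) (w : Sym2 V → ℕ)
    (hG : ∀ e ∈ G, ¬ e.IsDiag) (hpos : ∀ e ∈ G, 0 < w e)
    (hbip : IsBipartite G) :
    matchWeight G w = matchNum (unfoldGraph G w) := by
  have hSwne : (0 : ℕ) ∈ {s | ∃ M : Finset (Sym2 V), M ⊆ G ∧ IsMatching M ∧ ∑ e ∈ M, w e = s} :=
    ⟨∅, Finset.empty_subset _,
      ⟨fun e he => absurd he (Finset.notMem_empty e),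
       fun e he => absurd he (Finset.notMem_empty e)⟩, Finset.sum_empty⟩
  have hSkne : (0 : ℕ) ∈ {k | ∃ M : Finset (Sym2 (V × ℕ)), M ⊆ unfoldGraph G w ∧
      IsMatching M ∧ M.card = k} :=
    ⟨∅, Finset.empty_subset _,
      ⟨fun e he => absurd he (Finset.notMem_empty e),
       fun e he => absurd he (Finset.notMem_empty e)⟩, Finset.card_empty⟩
  have hSwbdd : BddAbove {s | ∃ M : Finset (Sym2 V), M ⊆ G ∧ IsMatching M ∧
      ∑ e ∈ M, w e = s} := by
    refine ⟨∑ e ∈ G, w e, ?_⟩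
    rintro s ⟨M, hM, -, rfl⟩
    exact Finset.sum_le_sum_of_subset hM
  have hSkbdd : BddAbove {k | ∃ M : Finset (Sym2 (V × ℕ)), M ⊆ unfoldGraph G w ∧
      IsMatching M ∧ M.card = k} := by
    refine ⟨(unfoldGraph G w).card, ?_⟩
    rintro k ⟨N, hN, -, rfl⟩
    exact Finset.card_le_card hN
  unfold matchWeight matchNum
  apply le_antisymm
  · refine csSup_le ⟨0, hSwne⟩ ?_
    rintro s ⟨M, hMG, hMm, rfl⟩
    obtain ⟨N, h1, h2, h3⟩ := UF.unfold_matching (w := w) hG hMG hMm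
    exact le_csSup hSkbdd ⟨N, h1, h2, h3⟩
  · refine csSup_le ⟨0, hSkne⟩ ?_
    rintro k ⟨N, hNG, hNm, rfl⟩
    obtain ⟨y, hy, M, hMG, hMm, hle⟩ := UF.egervary (w := w) hG hbip
    calc N.card ≤ ∑ v ∈ UFverts G, y v := UF.matching_le_cover y hy hNG hNm
      _ ≤ ∑ e ∈ M, w e := hle
      _ ≤ sSup {s | ∃ M : Finset (Sym2 V), M ⊆ G ∧ IsMatching M ∧ ∑ e ∈ M, w e = s} :=
        le_csSup hSwbdd ⟨M, hMG, hMm, rfl⟩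
end
end

section
/- Let G be a weighted bipartite graph with positive integral edge weights and let H be any subgraph of the unfolding φ(G). Define the refolding R(H) ⊆ G to consist of all weighted edges e=(u,v) of G such that (u^i, v^{w_e-i+1}) ∈ H for some i ∈ [w_e]. Then the maximum weight of a matching in R(H) is at least the maximum cardinality of a matching in H: μ_w(R(H)) ≥ μ(H). -/
open scoped Classical BigOperators

noncomputable section

variable {V : Type*}

def vertsR (R : Finset (Sym2 V)) : Finset V := R.biUnion fun e => {e.out.1, e.out.2}

def IsNatCover (R : Finset (Sym2 V)) (w : Sym2 V → ℕ) (y : V → ℕ) : Prop :=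
  ∀ e ∈ R, ∀ p q : V, e = s(p, q) → w e ≤ y p + y q

lemma out_rep (e : Sym2 V) : e = s(e.out.1, e.out.2) := by
  conv_lhs => rw [← e.out_eq]

lemma mem_vertsR {R : Finset (Sym2 V)} {e : Sym2 V} (he : e ∈ R) {x : V} (hx : x ∈ e) :
    x ∈ vertsR R := by
  refine Finset.mem_biUnion.2 ⟨e, he, ?_⟩
  rw [out_rep e, Sym2.mem_iff] at hx
  simpa using hx

lemma charge_le {G : Finset (Sym2 V)} {w : Sym2 V → ℕ} {H : Finset (Sym2 (V × ℕ))}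
    (hH : H ⊆ unfoldGraph G w)
    {y : V → ℕ} (hy : IsNatCover (refold G w H) w y)
    {M : Finset (Sym2 (V × ℕ))} (hM : M ⊆ H) (hmatch : IsMatching M) :
    M.card ≤ ∑ x ∈ vertsR (refold G w H), y x := by
  set R := refold G w H with hR
  set Tgt : Finset (V × ℕ) := (vertsR R).biUnion (fun x => {x} ×ˢ Finset.Icc 1 (y x)) with hTgt
  have key : ∀ f ∈ M, ∃ p : V × ℕ, p ∈ f ∧ p ∈ Tgt := by
    intro f hf
    have hfH : f ∈ H := hM hf
    have hfu : f ∈ unfoldGraph G w := hH hfH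
    rw [unfoldGraph, Finset.mem_biUnion] at hfu
    obtain ⟨e, heG, hfe⟩ := hfu
    have heR : e ∈ R := by
      rw [hR, refold, Finset.mem_filter]
      exact ⟨heG, f, hfe, hfH⟩
    rw [unfoldEdge, Finset.mem_image] at hfe
    obtain ⟨i, hi, hfi⟩ := hfe
    rw [Finset.mem_Icc] at hi
    have hcov : w e ≤ y e.out.1 + y e.out.2 := hy e heR _ _ (out_rep e)
    by_cases hc : i ≤ y e.out.1
    · refine ⟨(e.out.1, i), ?_, ?_⟩
      · rw [← hfi]; exact Sym2.mem_mk_left _ _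
      · refine Finset.mem_biUnion.2 ⟨e.out.1, mem_vertsR heR (Sym2.out_fst_mem e), ?_⟩
        simp only [Finset.mem_product, Finset.mem_singleton, Finset.mem_Icc]
        exact ⟨trivial, hi.1, hc⟩
    · refine ⟨(e.out.2, w e + 1 - i), ?_, ?_⟩
      · rw [← hfi]; exact Sym2.mem_mk_right _ _
      · refine Finset.mem_biUnion.2 ⟨e.out.2, mem_vertsR heR (Sym2.out_snd_mem e), ?_⟩
        simp only [Finset.mem_product, Finset.mem_singleton, Finset.mem_Icc]
        refine ⟨trivial, ?_, ?_⟩ <;> omega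
  obtain ⟨c, hc⟩ : ∃ c : Sym2 (V × ℕ) → V × ℕ, ∀ f ∈ M, c f ∈ f ∧ c f ∈ Tgt := by
    refine ⟨fun f => if h : ∃ p : V × ℕ, p ∈ f ∧ p ∈ Tgt then h.choose else f.out.1, ?_⟩
    intro f hf
    have h := key f hf
    simp only [dif_pos h]
    exact h.choose_spec
  have hcard : M.card ≤ Tgt.card := by
    refine Finset.card_le_card_of_injOn c (fun f hf => (hc f hf).2) ?_
    intro f hf g hg hfg
    by_contra hne
    exact hmatch.2 f hf g hg hne (c f) (hc f hf).1 (hfg ▸ (hc g hg).1)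
  refine hcard.trans ?_
  rw [hTgt, Finset.card_biUnion]
  · refine le_of_eq (Finset.sum_congr rfl ?_)
    intro x _
    simp [Nat.card_Icc]
  · intro a _ b _ hab
    simp only [Finset.disjoint_left]
    intro p hp hp2
    simp only [Finset.mem_product, Finset.mem_singleton] at hp hp2
    exact hab (hp.1.symm.trans hp2.1)

lemma hall_side {R : Finset (Sym2 V)} {w : Sym2 V → ℕ} {y : V → ℕ} (side : V → Prop)
    (P : Finset V)
    (hPmem : ∀ x, x ∈ P ↔ x ∈ vertsR R ∧ side x ∧ 0 < y x)
    (hrep : ∀ e ∈ R, ∃ p q, e = s(p, q) ∧ side p ∧ ¬ side q)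
    (hy : IsNatCover R w y)
    (hmin : ∀ z, IsNatCover R w z → ∑ x ∈ vertsR R, y x ≤ ∑ x ∈ vertsR R, z x) :
    ∃ σ : V → V, Set.InjOn σ ↑P ∧
      ∀ u ∈ P,
        ¬ side (σ u) ∧ s(u, σ u) ∈ R ∧ y u + y (σ u) = w s(u, σ u) := by
  set t : {x // x ∈ P} → Finset V := fun u =>
    (vertsR R).filter (fun q => ¬ side q ∧ s(u.1, q) ∈ R ∧ y u.1 + y q ≤ w s(u.1, q)) with ht
  have hPprop : ∀ x ∈ P, side x ∧ 0 < y x := by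
    intro x hx; exact ((hPmem x).1 hx).2
  have hall : ∀ s : Finset {x // x ∈ P}, s.card ≤ (s.biUnion t).card := by
    intro s
    by_contra hlt
    push_neg at hlt
    set S := s.image (fun u => u.1) with hS
    set Γ := s.biUnion t with hΓ
    have hSsub : S ⊆ P := by
      intro x hx
      rw [hS, Finset.mem_image] at hx
      obtain ⟨u, _, rfl⟩ := hx
      exact u.2
    have hSv : S ⊆ vertsR R := fun x hx => ((hPmem x).1 (hSsub hx)).1
    have hΓv : Γ ⊆ vertsR R := by
      intro q hq
      rw [hΓ, Finset.mem_biUnion] at hq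
      obtain ⟨u, _, hq⟩ := hq
      exact (Finset.mem_filter.1 hq).1
    have hScard : S.card = s.card := Finset.card_image_of_injective _ Subtype.val_injective
    have hSide : ∀ x ∈ S, side x ∧ 0 < y x := fun x hx => hPprop x (hSsub hx)
    have hΓside : ∀ q ∈ Γ, ¬ side q := by
      intro q hq
      rw [hΓ, Finset.mem_biUnion] at hq
      obtain ⟨u, _, hq⟩ := hq
      exact (Finset.mem_filter.1 hq).2.1
    set z := fun x => if x ∈ Γ then y x + 1 else if x ∈ S then y x - 1 else y x with hz
    have hzΓ : ∀ x ∈ Γ, z x = y x + 1 := by intro x hx; simp [hz, hx]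
    have hzS : ∀ x ∈ S, z x = y x - 1 := by
      intro x hx
      have : x ∉ Γ := fun h => hΓside x h (hSide x hx).1
      simp [hz, hx, this]
    have hzo : ∀ x, x ∉ S → y x ≤ z x := by
      intro x hx
      simp only [hz]
      split
      · omega
      · simp [hx]
    have hzcov : IsNatCover R w z := by
      intro e he p q hpq
      obtain ⟨p₀, q₀, he₀, hs₀, hns₀⟩ := hrep e he
      have hcov : w e ≤ y p₀ + y q₀ := hy e he p₀ q₀ he₀
      have hsum : z p + z q = z p₀ + z q₀ := by
        rw [he₀] at hpq
        rcases Sym2.eq_iff.1 hpq.symm with ⟨rfl, rfl⟩ | ⟨rfl, rfl⟩ <;> ring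
      rw [hsum]
      have hq₀S : q₀ ∉ S := fun h => hns₀ (hSide q₀ h).1
      by_cases hpS : p₀ ∈ S
      · have hyp : 0 < y p₀ := (hSide p₀ hpS).2
        by_cases htight : y p₀ + y q₀ ≤ w e
        · obtain ⟨u, hu, hval⟩ : ∃ u ∈ s, u.1 = p₀ := by
            rw [hS, Finset.mem_image] at hpS
            obtain ⟨u, hu, h⟩ := hpS
            exact ⟨u, hu, h⟩
          have hq₀Γ : q₀ ∈ Γ := by
            refine Finset.mem_biUnion.2 ⟨u, hu, ?_⟩
            rw [ht]
            refine Finset.mem_filter.2 ⟨mem_vertsR he (by rw [he₀]; exact Sym2.mem_mk_right _ _), hns₀, ?_, ?_⟩ <;>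
              rw [hval, ← he₀]
            exacts [he, htight]
          rw [hzΓ q₀ hq₀Γ, hzS p₀ hpS]
          omega
        · have h1 := hzo q₀ hq₀S
          rw [hzS p₀ hpS]
          omega
      · have h1 := hzo q₀ hq₀S
        have h2 := hzo p₀ hpS
        omega
    have hss := hmin z hzcov
    have hkey : ∀ x, z x + (if x ∈ S then 1 else 0) = y x + (if x ∈ Γ then 1 else 0) := by
      intro x
      by_cases hxΓ : x ∈ Γ
      · have hxS : x ∉ S := fun h => hΓside x hxΓ (hSide x h).1
        simp [hzΓ x hxΓ, hxS, hxΓ]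
      · by_cases hxS : x ∈ S
        · have := (hSide x hxS).2
          rw [hzS x hxS]
          simp [hxΓ, hxS]
          omega
        · simp [hz, hxΓ, hxS]
    have hsum2 : (∑ x ∈ vertsR R, z x) + S.card = (∑ x ∈ vertsR R, y x) + Γ.card := by
      have h1 : ∑ x ∈ vertsR R, (if x ∈ S then (1:ℕ) else 0) = S.card := by
        rw [Finset.sum_ite_mem, Finset.inter_eq_right.2 hSv]
        simp
      have h2 : ∑ x ∈ vertsR R, (if x ∈ Γ then (1:ℕ) else 0) = Γ.card := by
        rw [Finset.sum_ite_mem, Finset.inter_eq_right.2 hΓv]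
        simp
      calc (∑ x ∈ vertsR R, z x) + S.card
          = ∑ x ∈ vertsR R, (z x + if x ∈ S then 1 else 0) := by rw [Finset.sum_add_distrib, h1]
        _ = ∑ x ∈ vertsR R, (y x + if x ∈ Γ then 1 else 0) := Finset.sum_congr rfl (fun x _ => hkey x)
        _ = (∑ x ∈ vertsR R, y x) + Γ.card := by rw [Finset.sum_add_distrib, h2]
    omega
  obtain ⟨f, hfinj, hft⟩ := (Finset.all_card_le_biUnion_card_iff_exists_injective t).1 hall
  refine ⟨fun x => if h : x ∈ P then f ⟨x, h⟩ else x, ?_, ?_⟩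
  · intro a ha b hb hab
    rw [Finset.mem_coe] at ha hb
    simp only [dif_pos ha, dif_pos hb] at hab
    have := hfinj hab
    exact congrArg Subtype.val this
  · intro u hu
    simp only [dif_pos hu]
    have hspec := hft ⟨u, hu⟩
    rw [ht] at hspec
    obtain ⟨hv, hns, hmem, hle⟩ := Finset.mem_filter.1 hspec
    exact ⟨hns, hmem, le_antisymm hle (hy _ hmem u _ rfl)⟩

lemma md_combine (side : V → Prop) :
    ∀ n (P Q : Finset V) (σ ρ : V → V), P.card + Q.card ≤ n →
    (∀ u ∈ P, side u) → (∀ v ∈ Q, ¬ side v) →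
    (∀ u ∈ P, ¬ side (σ u)) → (∀ v ∈ Q, side (ρ v)) →
    Set.InjOn σ ↑P → Set.InjOn ρ ↑Q →
    ∃ N : Finset (Sym2 V),
      (∀ f ∈ N, (∃ u ∈ P, f = s(u, σ u)) ∨ (∃ v ∈ Q, f = s(ρ v, v))) ∧
      IsMatching N ∧ (∀ u ∈ P, ∃ f ∈ N, u ∈ f) ∧ (∀ v ∈ Q, ∃ f ∈ N, v ∈ f) := by
  intro n
  induction n with
  | zero =>
    intro P Q σ ρ hcard _ _ _ _ _ _
    have hP : P = ∅ := Finset.card_eq_zero.1 (by omega)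
    have hQ : Q = ∅ := Finset.card_eq_zero.1 (by omega)
    subst hP; subst hQ
    exact ⟨∅, by simp, ⟨by simp, by simp⟩, by simp, by simp⟩
  | succ n ih =>
    intro P Q σ ρ hcard hP hQ hσs hρs hσinj hρinj
    by_cases hA : ∃ u ∈ P, u ∉ Q.image ρ
    · obtain ⟨u, huP, huρ⟩ := hA
      obtain ⟨N', hform', hmatch', hcovP', hcovQ'⟩ :=
        ih (P.erase u) (Q.erase (σ u)) σ ρ
          (by
            have h1 := Finset.card_erase_of_mem huP
            have h2 := Finset.card_erase_le (s := Q) (a := σ u)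
            have h3 : 0 < P.card := Finset.card_pos.2 ⟨u, huP⟩
            omega)
          (fun x hx => hP x (Finset.mem_of_mem_erase hx))
          (fun x hx => hQ x (Finset.mem_of_mem_erase hx))
          (fun x hx => hσs x (Finset.mem_of_mem_erase hx))
          (fun x hx => hρs x (Finset.mem_of_mem_erase hx))
          (hσinj.mono (by simp [Finset.coe_subset]))
          (hρinj.mono (by simp [Finset.coe_subset]))
      have hnewvert : ∀ f ∈ N', ∀ x, x ∈ f → x ≠ u ∧ x ≠ σ u := by
        intro f hf x hxf
        rcases hform' f hf with ⟨a, ha, rfl⟩ | ⟨b, hb, rfl⟩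
        · have haP := Finset.mem_of_mem_erase ha
          have hau : a ≠ u := Finset.ne_of_mem_erase ha
          rcases Sym2.mem_iff.1 hxf with h1 | h1 <;> rw [h1]
          · exact ⟨hau, fun h => hσs u huP (by rw [← h]; exact hP a haP)⟩
          · refine ⟨fun h => hσs a haP (by rw [h]; exact hP u huP), ?_⟩
            intro h
            exact hau (hσinj (Finset.mem_coe.2 haP) (Finset.mem_coe.2 huP) h)
        · have hbQ := Finset.mem_of_mem_erase hb
          have hbσ : b ≠ σ u := Finset.ne_of_mem_erase hb
          rcases Sym2.mem_iff.1 hxf with h1 | h1 <;> rw [h1]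
          · refine ⟨fun h => huρ (Finset.mem_image.2 ⟨b, hbQ, h⟩), ?_⟩
            intro h
            exact hσs u huP (by rw [← h]; exact hρs b hbQ)
          · exact ⟨fun h => hQ b hbQ (by rw [h]; exact hP u huP), hbσ⟩
      have hudiag : u ≠ σ u := fun h => hσs u huP (by rw [← h]; exact hP u huP)
      refine ⟨insert s(u, σ u) N', ?_, ⟨?_, ?_⟩, ?_, ?_⟩
      · intro f hf
        rcases Finset.mem_insert.1 hf with rfl | hf
        · exact Or.inl ⟨u, huP, rfl⟩
        · rcases hform' f hf with ⟨a, ha, rfl⟩ | ⟨b, hb, rfl⟩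
          · exact Or.inl ⟨a, Finset.mem_of_mem_erase ha, rfl⟩
          · exact Or.inr ⟨b, Finset.mem_of_mem_erase hb, rfl⟩
      · intro e he
        rcases Finset.mem_insert.1 he with rfl | he
        · rw [Sym2.mk_isDiag_iff]; exact hudiag
        · exact hmatch'.1 e he
      · intro e he f hf hef x hxe hxf
        rcases Finset.mem_insert.1 he with rfl | he <;> rcases Finset.mem_insert.1 hf with rfl | hf
        · exact hef rfl
        · have := hnewvert f hf x hxf
          rcases Sym2.mem_iff.1 hxe with h1 | h1
          · exact this.1 h1
          · exact this.2 h1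
        · have := hnewvert e he x hxe
          rcases Sym2.mem_iff.1 hxf with h1 | h1
          · exact this.1 h1
          · exact this.2 h1
        · exact hmatch'.2 e he f hf hef x hxe hxf
      · intro a haP
        by_cases hau : a = u
        · exact ⟨s(u, σ u), Finset.mem_insert_self _ _, by rw [hau]; exact Sym2.mem_mk_left _ _⟩
        · obtain ⟨f, hf, hxf⟩ := hcovP' a (Finset.mem_erase.2 ⟨hau, haP⟩)
          exact ⟨f, Finset.mem_insert_of_mem hf, hxf⟩
      · intro b hbQ
        by_cases hbσ : b = σ u
        · exact ⟨s(u, σ u), Finset.mem_insert_self _ _, by rw [hbσ]; exact Sym2.mem_mk_right _ _⟩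
        · obtain ⟨f, hf, hxf⟩ := hcovQ' b (Finset.mem_erase.2 ⟨hbσ, hbQ⟩)
          exact ⟨f, Finset.mem_insert_of_mem hf, hxf⟩
    · by_cases hB : ∃ v ∈ Q, v ∉ P.image σ
      · obtain ⟨v, hvQ, hvσ⟩ := hB
        obtain ⟨N', hform', hmatch', hcovP', hcovQ'⟩ :=
          ih (P.erase (ρ v)) (Q.erase v) σ ρ
            (by
              have h1 := Finset.card_erase_of_mem hvQ
              have h2 := Finset.card_erase_le (s := P) (a := ρ v)
              have h3 : 0 < Q.card := Finset.card_pos.2 ⟨v, hvQ⟩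
              omega)
            (fun x hx => hP x (Finset.mem_of_mem_erase hx))
            (fun x hx => hQ x (Finset.mem_of_mem_erase hx))
            (fun x hx => hσs x (Finset.mem_of_mem_erase hx))
            (fun x hx => hρs x (Finset.mem_of_mem_erase hx))
            (hσinj.mono (by simp [Finset.coe_subset]))
            (hρinj.mono (by simp [Finset.coe_subset]))
        have hnewvert : ∀ f ∈ N', ∀ x, x ∈ f → x ≠ ρ v ∧ x ≠ v := by
          intro f hf x hxf
          rcases hform' f hf with ⟨a, ha, rfl⟩ | ⟨b, hb, rfl⟩
          · have haP := Finset.mem_of_mem_erase ha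
            have haρ : a ≠ ρ v := Finset.ne_of_mem_erase ha
            rcases Sym2.mem_iff.1 hxf with h1 | h1 <;> rw [h1]
            · exact ⟨haρ, fun h => hQ v hvQ (by rw [← h]; exact hP a haP)⟩
            · refine ⟨fun h => hσs a haP (by rw [h]; exact hρs v hvQ), ?_⟩
              intro h
              exact hvσ (Finset.mem_image.2 ⟨a, haP, h⟩)
          · have hbQ := Finset.mem_of_mem_erase hb
            have hbv : b ≠ v := Finset.ne_of_mem_erase hb
            rcases Sym2.mem_iff.1 hxf with h1 | h1 <;> rw [h1]
            · refine ⟨?_, fun h => hQ v hvQ (by rw [← h]; exact hρs b hbQ)⟩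
              intro h
              exact hbv (hρinj (Finset.mem_coe.2 hbQ) (Finset.mem_coe.2 hvQ) h)
            · exact ⟨fun h => hQ b hbQ (by rw [h]; exact hρs v hvQ), hbv⟩
        have hudiag : ρ v ≠ v := fun h => hQ v hvQ (by rw [← h]; exact hρs v hvQ)
        refine ⟨insert s(ρ v, v) N', ?_, ⟨?_, ?_⟩, ?_, ?_⟩
        · intro f hf
          rcases Finset.mem_insert.1 hf with rfl | hf
          · exact Or.inr ⟨v, hvQ, rfl⟩
          · rcases hform' f hf with ⟨a, ha, rfl⟩ | ⟨b, hb, rfl⟩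
            · exact Or.inl ⟨a, Finset.mem_of_mem_erase ha, rfl⟩
            · exact Or.inr ⟨b, Finset.mem_of_mem_erase hb, rfl⟩
        · intro e he
          rcases Finset.mem_insert.1 he with rfl | he
          · rw [Sym2.mk_isDiag_iff]; exact hudiag
          · exact hmatch'.1 e he
        · intro e he f hf hef x hxe hxf
          rcases Finset.mem_insert.1 he with rfl | he <;> rcases Finset.mem_insert.1 hf with rfl | hf
          · exact hef rfl
          · have := hnewvert f hf x hxf
            rcases Sym2.mem_iff.1 hxe with h1 | h1
            · exact this.1 h1
            · exact this.2 h1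
          · have := hnewvert e he x hxe
            rcases Sym2.mem_iff.1 hxf with h1 | h1
            · exact this.1 h1
            · exact this.2 h1
          · exact hmatch'.2 e he f hf hef x hxe hxf
        · intro a haP
          by_cases hau : a = ρ v
          · exact ⟨s(ρ v, v), Finset.mem_insert_self _ _, by rw [hau]; exact Sym2.mem_mk_left _ _⟩
          · obtain ⟨f, hf, hxf⟩ := hcovP' a (Finset.mem_erase.2 ⟨hau, haP⟩)
            exact ⟨f, Finset.mem_insert_of_mem hf, hxf⟩
        · intro b hbQ
          by_cases hbv : b = v
          · exact ⟨s(ρ v, v), Finset.mem_insert_self _ _, by rw [hbv]; exact Sym2.mem_mk_right _ _⟩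
          · obtain ⟨f, hf, hxf⟩ := hcovQ' b (Finset.mem_erase.2 ⟨hbv, hbQ⟩)
            exact ⟨f, Finset.mem_insert_of_mem hf, hxf⟩
      · push_neg at hA hB
        have hPsub : P ⊆ Q.image ρ := hA
        have hQsub : Q ⊆ P.image σ := hB
        have hcard1 : P.card ≤ Q.card := by
          calc P.card ≤ (Q.image ρ).card := Finset.card_le_card hPsub
            _ = Q.card := Finset.card_image_of_injOn hρinj
        have himg : (P.image σ).card = P.card := Finset.card_image_of_injOn hσinj
        have hQeq : Q = P.image σ := Finset.eq_of_subset_of_card_le hQsub (by omega)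
        refine ⟨P.image (fun u => s(u, σ u)), ?_, ⟨?_, ?_⟩, ?_, ?_⟩
        · intro f hf
          obtain ⟨a, ha, rfl⟩ := Finset.mem_image.1 hf
          exact Or.inl ⟨a, ha, rfl⟩
        · intro e he
          obtain ⟨a, ha, rfl⟩ := Finset.mem_image.1 he
          rw [Sym2.mk_isDiag_iff]
          exact fun h => hσs a ha (by rw [← h]; exact hP a ha)
        · intro e he f hf hef x hxe hxf
          obtain ⟨a, ha, rfl⟩ := Finset.mem_image.1 he
          obtain ⟨c, hc, rfl⟩ := Finset.mem_image.1 hf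
          have hac : a ≠ c := fun h => hef (by rw [h])
          rcases Sym2.mem_iff.1 hxe with h1 | h1 <;> rcases Sym2.mem_iff.1 hxf with h2 | h2
          · exact hac (h1.symm.trans h2)
          · exact hσs c hc (by rw [← h2, h1]; exact hP a ha)
          · exact hσs a ha (by rw [← h1, h2]; exact hP c hc)
          · exact hac (hσinj (Finset.mem_coe.2 ha) (Finset.mem_coe.2 hc) (h1.symm.trans h2))
        · intro a haP
          exact ⟨s(a, σ a), Finset.mem_image_of_mem _ haP, Sym2.mem_mk_left _ _⟩
        · intro b hbQ
          rw [hQeq] at hbQ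
          obtain ⟨a, ha, rfl⟩ := Finset.mem_image.1 hbQ
          exact ⟨s(a, σ a), Finset.mem_image_of_mem _ ha, Sym2.mem_mk_right _ _⟩

/-- For a weighted bipartite graph `G` with positive integral weights and
any subgraph `H` of the unfolding φ(G), the maximum matching weight of the refolding
R(H) is at least the maximum matching cardinality of `H`. -/
theorem refolding_preserves_matching
    (G : Finset (Sym2 V)) (w : Sym2 V → ℕ)
    (hG : ∀ e ∈ G, ¬ e.IsDiag) (hpos : ∀ e ∈ G, 0 < w e)
    (hbip : IsBipartite G)
    (H : Finset (Sym2 (V × ℕ))) (hH : H ⊆ unfoldGraph G w) :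
    matchNum H ≤ matchWeight (refold G w H) w := by
  classical
  obtain ⟨A, hA⟩ := hbip
  set R := refold G w H with hRdef
  have hRsub : R ⊆ G := Finset.filter_subset _ _
  have hne : Set.Nonempty {s | ∃ z : V → ℕ, IsNatCover R w z ∧ ∑ x ∈ vertsR R, z x = s} := by
    refine ⟨∑ x ∈ vertsR R, R.sup w, fun _ => R.sup w, ?_, rfl⟩
    intro e he p q hpq
    exact le_trans (Finset.le_sup (f := w) he) (Nat.le_add_right _ _)
  obtain ⟨y, hycov, hysum⟩ := Nat.sInf_mem hne
  have hmin : ∀ z, IsNatCover R w z → ∑ x ∈ vertsR R, y x ≤ ∑ x ∈ vertsR R, z x := by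
    intro z hz
    rw [hysum]
    exact Nat.sInf_le ⟨z, hz, rfl⟩
  have hrep1 : ∀ e ∈ R, ∃ p q, e = s(p, q) ∧ p ∈ A ∧ ¬ q ∈ A := by
    intro e he
    obtain ⟨p, q, h1, h2, h3⟩ := hA e (hRsub he)
    exact ⟨p, q, h1, h2, h3⟩
  have hrep2 : ∀ e ∈ R, ∃ p q, e = s(p, q) ∧ (¬ p ∈ A) ∧ ¬ ¬ q ∈ A := by
    intro e he
    obtain ⟨p, q, h1, h2, h3⟩ := hA e (hRsub he)
    exact ⟨q, p, by rw [h1, Sym2.eq_swap], h3, not_not.2 h2⟩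
  set Pp := (vertsR R).filter (fun x => x ∈ A ∧ 0 < y x) with hPp
  set Qq := (vertsR R).filter (fun x => (¬ x ∈ A) ∧ 0 < y x) with hQq
  have hPmem : ∀ x, x ∈ Pp ↔ x ∈ vertsR R ∧ x ∈ A ∧ 0 < y x := by
    intro x
    rw [hPp, Finset.mem_filter]
  have hQmem : ∀ x, x ∈ Qq ↔ x ∈ vertsR R ∧ (¬ x ∈ A) ∧ 0 < y x := by
    intro x
    rw [hQq, Finset.mem_filter]
  obtain ⟨σ, hσinj, hσ⟩ := hall_side (fun x => x ∈ A) Pp hPmem hrep1 hycov hmin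
  obtain ⟨ρ0, hρinj, hρ⟩ := hall_side (fun x => ¬ x ∈ A) Qq hQmem hrep2 hycov hmin
  obtain ⟨N, hform, hNmatch, hcovP, hcovQ⟩ :=
    md_combine (fun x => x ∈ A) (Pp.card + Qq.card) Pp Qq σ ρ0 le_rfl
      (fun u hu => ((hPmem u).1 hu).2.1)
      (fun v hv => ((hQmem v).1 hv).2.1)
      (fun u hu => (hσ u hu).1)
      (fun v hv => not_not.1 (hρ v hv).1)
      hσinj hρinj
  have hNsub : N ⊆ R := by
    intro f hf
    rcases hform f hf with ⟨u, hu, rfl⟩ | ⟨v, hv, rfl⟩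
    · exact (hσ u hu).2.1
    · rw [Sym2.eq_swap]
      exact (hρ v hv).2.1
  set U := Pp ∪ Qq with hU
  have hUsub : U ⊆ vertsR R := by
    intro x hx
    rcases Finset.mem_union.1 hx with h | h
    · exact ((hPmem x).1 h).1
    · exact ((hQmem x).1 h).1
  have hzero : ∀ x ∈ vertsR R, x ∉ U → y x = 0 := by
    intro x hx hxU
    by_contra h
    have hy0 : 0 < y x := Nat.pos_of_ne_zero h
    rcases em (x ∈ A) with hxa | hxa
    · exact hxU (Finset.mem_union_left _ ((hPmem x).2 ⟨hx, hxa, hy0⟩))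
    · exact hxU (Finset.mem_union_right _ ((hQmem x).2 ⟨hx, hxa, hy0⟩))
  have h1 : ∑ x ∈ vertsR R, y x = ∑ x ∈ U, y x :=
    (Finset.sum_subset hUsub (fun x hx hxU => hzero x hx hxU)).symm
  have hUcov : U = N.biUnion (fun f => U.filter (· ∈ f)) := by
    apply Finset.Subset.antisymm
    · intro x hx
      have hxf : ∃ f ∈ N, x ∈ f := by
        rcases Finset.mem_union.1 hx with h | h
        exacts [hcovP x h, hcovQ x h]
      obtain ⟨f, hfN, hxf⟩ := hxf
      exact Finset.mem_biUnion.2 ⟨f, hfN, Finset.mem_filter.2 ⟨hx, hxf⟩⟩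
    · intro x hx
      obtain ⟨f, _, hx⟩ := Finset.mem_biUnion.1 hx
      exact (Finset.mem_filter.1 hx).1
  have hdisj : (↑N : Set (Sym2 V)).PairwiseDisjoint (fun f => U.filter (· ∈ f)) := by
    intro f hf g hg hfg
    simp only [Function.onFun]
    refine Finset.disjoint_left.2 (fun x hxf hxg => ?_)
    exact hNmatch.2 f hf g hg hfg x (Finset.mem_filter.1 hxf).2 (Finset.mem_filter.1 hxg).2
  have h2 : ∑ x ∈ U, y x = ∑ f ∈ N, ∑ x ∈ U.filter (· ∈ f), y x := by
    conv_lhs => rw [hUcov]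
    exact Finset.sum_biUnion hdisj
  have h3 : ∀ f ∈ N, ∑ x ∈ U.filter (· ∈ f), y x ≤ w f := by
    intro f hfN
    rcases hform f hfN with ⟨u, hu, rfl⟩ | ⟨v, hv, rfl⟩
    · have hne2 : u ≠ σ u := fun h => (hσ u hu).1 (h ▸ ((hPmem u).1 hu).2.1)
      have hsubpair : U.filter (· ∈ s(u, σ u)) ⊆ {u, σ u} := by
        intro x hx
        have hmem := (Finset.mem_filter.1 hx).2
        rw [Sym2.mem_iff] at hmem
        simpa using hmem
      calc ∑ x ∈ U.filter (· ∈ s(u, σ u)), y x ≤ ∑ x ∈ ({u, σ u} : Finset V), y x :=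
            Finset.sum_le_sum_of_subset hsubpair
        _ = y u + y (σ u) := Finset.sum_pair hne2
        _ = w s(u, σ u) := (hσ u hu).2.2
    · have hne2 : ρ0 v ≠ v := by
        intro h
        exact ((hQmem v).1 hv).2.1 (h ▸ not_not.1 (hρ v hv).1)
      have hsubpair : U.filter (· ∈ s(ρ0 v, v)) ⊆ {ρ0 v, v} := by
        intro x hx
        have hmem := (Finset.mem_filter.1 hx).2
        rw [Sym2.mem_iff] at hmem
        simpa using hmem
      calc ∑ x ∈ U.filter (· ∈ s(ρ0 v, v)), y x ≤ ∑ x ∈ ({ρ0 v, v} : Finset V), y x :=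
            Finset.sum_le_sum_of_subset hsubpair
        _ = y (ρ0 v) + y v := Finset.sum_pair hne2
        _ = w s(ρ0 v, v) := by
            rw [Sym2.eq_swap, ← (hρ v hv).2.2]
            ring
  have hwN : ∑ x ∈ vertsR R, y x ≤ ∑ f ∈ N, w f := by
    rw [h1, h2]
    exact Finset.sum_le_sum h3
  refine csSup_le ⟨0, ∅, Finset.empty_subset _, ⟨by simp, by simp⟩, rfl⟩ ?_
  rintro k ⟨M, hMH, hMmatch, rfl⟩
  have h5 : M.card ≤ ∑ f ∈ N, w f := (charge_le hH hycov hMH hMmatch).trans hwN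
  refine h5.trans (le_csSup ?_ ?_)
  · refine ⟨∑ e ∈ R, w e, ?_⟩
    rintro s ⟨M2, hM2, _, rfl⟩
    exact Finset.sum_le_sum_of_subset hM2
  · exact ⟨N, hNsub, hNmatch, rfl⟩
end
end

section
/- There exists a weighted non-bipartite graph G and a subgraph H of its unfolding φ(G) such that μ_w(R(H)) < μ(H). Concretely, let G be the triangle on vertices x,y,z with all three edge weights equal to 2, and let H = {(x^1,z^2), (z^1,y^2), (y^1,x^2)} ⊆ φ(G). Then μ(H) = 3 but μ_w(R(H)) = 2. -/
open scoped Classical BigOperators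

noncomputable section

variable {V : Type*}

lemma out_pair {α} (a b : α) : (s(a,b)).out = (a,b) ∨ (s(a,b)).out = (b,a) := by
  have h : s((s(a,b)).out.1, (s(a,b)).out.2) = s(a,b) := by
    exact Quot.out_eq _
  rw [Sym2.eq_iff] at h
  rcases h with ⟨h1,h2⟩|⟨h1,h2⟩
  · left; exact Prod.ext h1 h2
  · right; exact Prod.ext h1 h2

lemma mem_refold (G : Finset (Sym2 V)) (w) (H) (e) :
    e ∈ refold G w H ↔ e ∈ G ∧ ∃ f ∈ unfoldEdge w e, f ∈ H := by
  unfold refold; exact Finset.mem_filter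

lemma refold_subset (G : Finset (Sym2 V)) (w) (H) : refold G w H ⊆ G := by
  unfold refold; exact Finset.filter_subset _ _

lemma unfoldEdge_eq (w : Sym2 V → ℕ) (hw : ∀ e, w e = 2) (a b : V) :
    unfoldEdge w s(a,b) = {s((a,1),(b,2)), s((a,2),(b,1))} := by
  have hI : Finset.Icc 1 (2:ℕ) = {1,2} := by decide
  rcases out_pair a b with h | h <;>
      simp only [unfoldEdge, hw, h, hI, Finset.image_insert, Finset.image_singleton] <;>
      norm_num
  rw [Finset.pair_comm]
  congr 1
  · exact Sym2.eq_swap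
  · congr 1; exact Sym2.eq_swap

/-- Refolding does not preserve matching size for non-bipartite graphs:
for the triangle `G` on x=0, y=1, z=2 with all edge weights 2, and the subgraph
H = {(x¹,z²), (z¹,y²), (y¹,x²)} of φ(G), we have μ(H) = 3 but μ_w(R(H)) = 2. -/
theorem refolding_fails_nonbipartite :
    ∃ (G : Finset (Sym2 (Fin 3))) (w : Sym2 (Fin 3) → ℕ)
      (H : Finset (Sym2 (Fin 3 × ℕ))),
      G = {s((0 : Fin 3), (1 : Fin 3)), s((1 : Fin 3), (2 : Fin 3)),
            s((0 : Fin 3), (2 : Fin 3))} ∧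
      (∀ e, w e = 2) ∧
      ¬ IsBipartite G ∧
      H = {s(((0 : Fin 3), 1), ((2 : Fin 3), 2)),
            s(((2 : Fin 3), 1), ((1 : Fin 3), 2)),
            s(((1 : Fin 3), 1), ((0 : Fin 3), 2))} ∧
      H ⊆ unfoldGraph G w ∧
      matchNum H = 3 ∧
      matchWeight (refold G w H) w = 2 ∧
      matchWeight (refold G w H) w < matchNum H := by
  set G : Finset (Sym2 (Fin 3)) :=
    {s((0 : Fin 3), (1 : Fin 3)), s((1 : Fin 3), (2 : Fin 3)), s((0 : Fin 3), (2 : Fin 3))} with hG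
  set w : Sym2 (Fin 3) → ℕ := fun _ => 2 with hwdef
  have hw : ∀ e, w e = 2 := fun _ => rfl
  set H : Finset (Sym2 (Fin 3 × ℕ)) :=
    {s(((0 : Fin 3), 1), ((2 : Fin 3), 2)), s(((2 : Fin 3), 1), ((1 : Fin 3), 2)),
      s(((1 : Fin 3), 1), ((0 : Fin 3), 2))} with hH
  have hbip : ¬ IsBipartite G := by
    -- not bipartite
    rintro ⟨A, hA⟩
    have h01 := hA s((0:Fin 3),(1:Fin 3)) (by simp [hG])
    have h12 := hA s((1:Fin 3),(2:Fin 3)) (by simp [hG])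
    have h02 := hA s((0:Fin 3),(2:Fin 3)) (by simp [hG])
    obtain ⟨u,v,he,hu,hv⟩ := h01
    obtain ⟨u',v',he',hu',hv'⟩ := h12
    obtain ⟨u'',v'',he'',hu'',hv''⟩ := h02
    rw [Sym2.eq_iff] at he he' he''
    rcases he with ⟨rfl,rfl⟩|⟨h1,h2⟩ <;> rcases he' with ⟨h3,h4⟩|⟨h3,h4⟩ <;>
      rcases he'' with ⟨h5,h6⟩|⟨h5,h6⟩ <;> subst_vars <;> simp_all
  have hsub : H ⊆ unfoldGraph G w := by
    intro f hf
    simp only [hH, Finset.mem_insert, Finset.mem_singleton] at hf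
    simp only [unfoldGraph, Finset.mem_biUnion]
    rcases hf with rfl | rfl | rfl
    · exact ⟨s((0:Fin 3),(2:Fin 3)), by simp [hG], by rw [unfoldEdge_eq w hw]; simp⟩
    · exact ⟨s((1:Fin 3),(2:Fin 3)), by simp [hG],
        by rw [unfoldEdge_eq w hw]; simp [Sym2.eq_swap]⟩
    · exact ⟨s((0:Fin 3),(1:Fin 3)), by simp [hG],
        by rw [unfoldEdge_eq w hw]; simp [Sym2.eq_swap]⟩
  have h3 : matchNum H = 3 := by
    have hub : ∀ k ∈ {k | ∃ M : Finset (Sym2 (Fin 3 × ℕ)), M ⊆ H ∧ IsMatching M ∧ M.card = k},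
        k ≤ 3 := by
      rintro k ⟨M, hMH, _, rfl⟩
      calc M.card ≤ H.card := Finset.card_le_card hMH
        _ ≤ 3 := by rw [hH]; decide
    have hmem : 3 ∈ {k | ∃ M : Finset (Sym2 (Fin 3 × ℕ)), M ⊆ H ∧ IsMatching M ∧ M.card = k} := by
      refine ⟨H, le_refl _, ⟨?_, ?_⟩, ?_⟩
      · intro e he
        simp only [hH, Finset.mem_insert, Finset.mem_singleton] at he
        rcases he with rfl | rfl | rfl <;> decide
      · intro e he f hf hef v hv
        simp only [hH, Finset.mem_insert, Finset.mem_singleton] at he hf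
        rcases he with rfl | rfl | rfl <;> rcases hf with rfl | rfl | rfl <;>
          first
            | exact absurd rfl hef
            | (rw [Sym2.mem_iff] at hv; rcases hv with rfl | rfl <;> decide)
      · rw [hH]; decide
    exact le_antisymm (csSup_le ⟨3, hmem⟩ hub) (le_csSup ⟨3, hub⟩ hmem)
  have h2 : matchWeight (refold G w H) w = 2 := by
    have hrefold : refold G w H = G := by
      refine Finset.Subset.antisymm (refold_subset G w H) ?_
      intro e he
      rw [mem_refold]
      refine ⟨he, ?_⟩
      simp only [hG, Finset.mem_insert, Finset.mem_singleton] at he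
      rcases he with rfl | rfl | rfl
      · exact ⟨s(((1:Fin 3),1),((0:Fin 3),2)), by rw [unfoldEdge_eq w hw]; simp [Sym2.eq_swap],
          by simp [hH]⟩
      · exact ⟨s(((2:Fin 3),1),((1:Fin 3),2)), by rw [unfoldEdge_eq w hw]; simp [Sym2.eq_swap],
          by simp [hH]⟩
      · exact ⟨s(((0:Fin 3),1),((2:Fin 3),2)), by rw [unfoldEdge_eq w hw]; simp, by simp [hH]⟩
    rw [hrefold]
    -- any matching in G has at most one edge
    have hcard : ∀ M : Finset (Sym2 (Fin 3)), M ⊆ G → IsMatching M → M.card ≤ 1 := by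
      intro M hMG hM
      by_contra h
      push_neg at h
      obtain ⟨e, he, f, hf, hef⟩ := Finset.one_lt_card.mp h
      have heG := hMG he
      have hfG := hMG hf
      have hd := hM.2 e he f hf hef
      simp only [hG, Finset.mem_insert, Finset.mem_singleton] at heG hfG
      rcases heG with rfl | rfl | rfl <;> rcases hfG with rfl | rfl | rfl <;>
        first
        | exact hef rfl
        | exact hd 0 (by decide) (by decide)
        | exact hd 1 (by decide) (by decide)
        | exact hd 2 (by decide) (by decide)
    have hub : ∀ s ∈ {s | ∃ M : Finset (Sym2 (Fin 3)), M ⊆ G ∧ IsMatching M ∧ ∑ e ∈ M, w e = s},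
        s ≤ 2 := by
      rintro s ⟨M, hMG, hM, rfl⟩
      calc ∑ e ∈ M, w e = 2 * M.card := by
            rw [Finset.sum_congr rfl fun e _ => hw e]; simp [mul_comm]
        _ ≤ 2 * 1 := by exact Nat.mul_le_mul_left 2 (hcard M hMG hM)
        _ = 2 := rfl
    have hmem : 2 ∈ {s | ∃ M : Finset (Sym2 (Fin 3)), M ⊆ G ∧ IsMatching M ∧ ∑ e ∈ M, w e = s} := by
      refine ⟨{s((0:Fin 3),(1:Fin 3))}, by simp [hG], ⟨?_, ?_⟩, by simp [hw]⟩
      · intro e he; simp only [Finset.mem_singleton] at he; subst he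
        simp [Sym2.isDiag_iff_proj_eq]
      · intro e he f hf hef; simp_all
    exact le_antisymm (csSup_le ⟨2, hmem⟩ hub) (le_csSup ⟨2, hub⟩ hmem)
  exact ⟨G, w, H, rfl, hw, hbip, rfl, hsub, h3, h2, by rw [h2, h3]; norm_num⟩
end
end

section
/- Let X_1,...,X_n be negatively associated random variables taking values in [0,1], let X = Σ X_i and μ = E[X]. Then for any 0 < δ < 1, Pr[X ≤ μ(1−δ)] ≤ exp(−μδ²/2). -/
open MeasureTheory
open scoped BigOperators

noncomputable section

/-- `f` depends only on the coordinates in `I`. -/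
def DependsOnlyOn {n : ℕ} (f : (Fin n → ℝ) → ℝ) (I : Finset (Fin n)) : Prop :=
  ∀ x y : Fin n → ℝ, (∀ i ∈ I, x i = y i) → f x = f y

/-- Negative association: for all disjoint index sets `I`, `J` and coordinatewise
non-decreasing functions `f` of the variables in `I` and `g` of the variables in `J`,
E[f·g] ≤ E[f]·E[g] (whenever the relevant expectations exist). -/
def NegAssoc {Ω : Type*} [MeasurableSpace Ω] (P : Measure Ω) {n : ℕ}
    (X : Fin n → Ω → ℝ) : Prop :=
  ∀ I J : Finset (Fin n), Disjoint I J →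
    ∀ f g : (Fin n → ℝ) → ℝ, Monotone f → Monotone g →
      DependsOnlyOn f I → DependsOnlyOn g J →
      Integrable (fun ω => f fun i => X i ω) P →
      Integrable (fun ω => g fun i => X i ω) P →
      Integrable (fun ω => (f fun i => X i ω) * (g fun i => X i ω)) P →
      ∫ ω, (f fun i => X i ω) * (g fun i => X i ω) ∂P ≤
        (∫ ω, (f fun i => X i ω) ∂P) * ∫ ω, (g fun i => X i ω) ∂P

/-! ### Auxiliary lemmas -/

lemma aux_int_bdd {Ω : Type*} [MeasurableSpace Ω] (P : Measure Ω) [IsProbabilityMeasure P]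
    {g : Ω → ℝ} (hg : Measurable g) {C : ℝ} (h : ∀ ω, ‖g ω‖ ≤ C) : Integrable g P :=
  (integrable_const C).mono' hg.aestronglyMeasurable (ae_of_all _ h)

lemma aux_log_ineq {d : ℝ} (h0 : 0 ≤ d) (h1 : d < 1) :
    (1 - d) * (-Real.log (1 - d)) - d ≤ -d ^ 2 / 2 := by
  have hderiv : ∀ x : ℝ, x ∈ Set.Ioo (0:ℝ) 1 →
      HasDerivAt (fun x : ℝ => (1 - x) * Real.log (1 - x) + x - x ^ 2 / 2)
        (-Real.log (1 - x) - x) x := by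
    intro x hx
    have hx1 : (0:ℝ) < 1 - x := by simp only [Set.mem_Ioo] at hx; linarith [hx.2]
    have h1x : HasDerivAt (fun x : ℝ => 1 - x) (-1) x := by
      simpa using (hasDerivAt_id x).const_sub 1
    have hlog : HasDerivAt (fun x : ℝ => Real.log (1 - x)) ((1 - x)⁻¹ * (-1)) x :=
      (Real.hasDerivAt_log hx1.ne').comp x h1x
    have hmul := h1x.mul hlog
    have hsq : HasDerivAt (fun x : ℝ => x ^ 2 / 2) x x := by
      simpa using (hasDerivAt_pow 2 x).div_const 2
    have := (hmul.add (hasDerivAt_id x)).sub hsq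
    refine this.congr_deriv ?_
    rw [mul_inv_cancel_left₀ hx1.ne']
    ring
  have key : MonotoneOn (fun x : ℝ => (1 - x) * Real.log (1 - x) + x - x ^ 2 / 2)
      (Set.Ico (0:ℝ) 1) := by
    apply monotoneOn_of_deriv_nonneg (convex_Ico 0 1)
    · apply continuousOn_of_forall_continuousAt
      intro x hx
      have hx1 : (1:ℝ) - x ≠ 0 := by
        simp only [Set.mem_Ico] at hx; intro h; linarith [hx.2]
      exact (((continuousAt_const.sub continuousAt_id).mul
        ((Real.continuousAt_log hx1).comp (continuousAt_const.sub continuousAt_id))).add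
        continuousAt_id).sub ((continuousAt_id.pow 2).div_const 2)
    · intro x hx
      rw [interior_Ico] at hx
      exact (hderiv x hx).differentiableAt.differentiableWithinAt
    · intro x hx
      rw [interior_Ico] at hx
      rw [(hderiv x hx).deriv]
      have hx1 : (0:ℝ) < 1 - x := by simp only [Set.mem_Ioo] at hx; linarith [hx.2]
      have := Real.log_le_sub_one_of_pos hx1
      simp only [Set.mem_Ioo] at hx
      linarith
  have h00 : (0:ℝ) ∈ Set.Ico (0:ℝ) 1 := by constructor <;> norm_num
  have hdd : d ∈ Set.Ico (0:ℝ) 1 := ⟨h0, h1⟩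
  have := key h00 hdd h0
  norm_num [Real.log_one] at this
  nlinarith [this]

lemma aux_prod_step {Ω : Type*} [MeasurableSpace Ω] (P : Measure Ω) [IsProbabilityMeasure P]
    {n : ℕ} (X : Fin n → Ω → ℝ)
    (hmeas : ∀ i, Measurable (X i))
    (hbdd : ∀ i, ∀ ω, X i ω ∈ Set.Icc (0 : ℝ) 1)
    (hNA : NegAssoc P X) {t : ℝ} (ht : 0 ≤ t) :
    ∀ s : Finset (Fin n),
      ∫ ω, ∏ i ∈ s, Real.exp (-t * X i ω) ∂P ≤ ∏ i ∈ s, ∫ ω, Real.exp (-t * X i ω) ∂P := by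
  have hexp_meas : ∀ (s : Finset (Fin n)), Measurable (fun ω => ∏ i ∈ s, Real.exp (-t * X i ω)) :=
    fun s => Finset.measurable_prod s fun i _ => (Real.measurable_exp.comp ((hmeas i).const_mul (-t)))
  have hexp_le_one : ∀ i ω, Real.exp (-t * X i ω) ≤ 1 := fun i ω => by
    rw [Real.exp_le_one_iff]
    nlinarith [(hbdd i ω).1]
  have hprod_bd : ∀ (s : Finset (Fin n)) ω, ‖∏ i ∈ s, Real.exp (-t * X i ω)‖ ≤ 1 := by
    intro s ω
    rw [Real.norm_eq_abs, abs_of_nonneg (Finset.prod_nonneg fun i _ => (Real.exp_pos _).le)]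
    exact Finset.prod_le_one (fun i _ => (Real.exp_pos _).le) (fun i _ => hexp_le_one i ω)
  have hint : ∀ (s : Finset (Fin n)), Integrable (fun ω => ∏ i ∈ s, Real.exp (-t * X i ω)) P :=
    fun s => aux_int_bdd P (hexp_meas s) (hprod_bd s)
  intro s
  induction s using Finset.induction_on with
  | empty => simp
  | @insert a s ha IH =>
    set F : (Fin n → ℝ) → ℝ := fun x => -Real.exp (-t * x a) with hF
    set G : (Fin n → ℝ) → ℝ := fun x => -(∏ i ∈ s, Real.exp (-t * x i)) with hG
    have hFmono : Monotone F := by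
      intro x y hxy
      simp only [hF, neg_le_neg_iff, Real.exp_le_exp]
      exact mul_le_mul_of_nonpos_left (hxy a) (neg_nonpos.2 ht)
    have hGmono : Monotone G := by
      intro x y hxy
      simp only [hG, neg_le_neg_iff]
      exact Finset.prod_le_prod (fun i _ => (Real.exp_pos _).le)
        (fun i _ => Real.exp_le_exp.2 (mul_le_mul_of_nonpos_left (hxy i) (neg_nonpos.2 ht)))
    have hFdep : DependsOnlyOn F {a} := by
      intro x y h; simp only [hF, h a (Finset.mem_singleton_self a)]
    have hGdep : DependsOnlyOn G s := by
      intro x y h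
      simp only [hG, neg_inj]
      exact Finset.prod_congr rfl fun i hi => by rw [h i hi]
    have hdisj : Disjoint ({a} : Finset (Fin n)) s := Finset.disjoint_singleton_left.2 ha
    have hintF : Integrable (fun ω => F fun i => X i ω) P := by
      simp only [hF]
      exact (aux_int_bdd P (Real.measurable_exp.comp ((hmeas a).const_mul (-t)))
        (C := 1) (fun ω => by
          simp only [Function.comp_apply, Real.norm_eq_abs, abs_of_pos (Real.exp_pos _)]
          exact hexp_le_one a ω)).neg
    have hintG : Integrable (fun ω => G fun i => X i ω) P := by
      simp only [hG]; exact (hint s).neg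
    have hFG : (fun ω => (F fun i => X i ω) * (G fun i => X i ω)) =
        fun ω => ∏ i ∈ insert a s, Real.exp (-t * X i ω) := by
      funext ω
      simp only [hF, hG, Finset.prod_insert ha, neg_mul_neg]
    have hintFG : Integrable (fun ω => (F fun i => X i ω) * (G fun i => X i ω)) P := by
      rw [hFG]; exact hint _
    have hna := hNA {a} s hdisj F G hFmono hGmono hFdep hGdep hintF hintG hintFG
    rw [hFG] at hna
    have hiF : (∫ ω, (F fun i => X i ω) ∂P) = -∫ ω, Real.exp (-t * X a ω) ∂P := by
      simp only [hF]; exact integral_neg _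
    have hiG : (∫ ω, (G fun i => X i ω) ∂P) = -∫ ω, ∏ i ∈ s, Real.exp (-t * X i ω) ∂P := by
      simp only [hG]; exact integral_neg _
    rw [hiF, hiG, neg_mul_neg] at hna
    have h0 : 0 ≤ ∫ ω, Real.exp (-t * X a ω) ∂P :=
      integral_nonneg fun ω => (Real.exp_pos _).le
    calc ∫ ω, ∏ i ∈ insert a s, Real.exp (-t * X i ω) ∂P
        ≤ (∫ ω, Real.exp (-t * X a ω) ∂P) * ∫ ω, ∏ i ∈ s, Real.exp (-t * X i ω) ∂P := hna
      _ ≤ (∫ ω, Real.exp (-t * X a ω) ∂P) * ∏ i ∈ s, ∫ ω, Real.exp (-t * X i ω) ∂P :=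
          mul_le_mul_of_nonneg_left IH h0
      _ = ∏ i ∈ insert a s, ∫ ω, Real.exp (-t * X i ω) ∂P := by rw [Finset.prod_insert ha]

lemma aux_single {Ω : Type*} [MeasurableSpace Ω] (P : Measure Ω) [IsProbabilityMeasure P]
    {Y : Ω → ℝ} (hm : Measurable Y) (hb : ∀ ω, Y ω ∈ Set.Icc (0:ℝ) 1) {t : ℝ} :
    ∫ ω, Real.exp (-t * Y ω) ∂P ≤ Real.exp (-(1 - Real.exp (-t)) * ∫ ω, Y ω ∂P) := by
  have hYint : Integrable Y P := aux_int_bdd P hm (C := 1) fun ω => by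
    rw [Real.norm_eq_abs, abs_of_nonneg (hb ω).1]; exact (hb ω).2
  have hEint : Integrable (fun ω => Real.exp (-t * Y ω)) P :=
    aux_int_bdd P (Real.measurable_exp.comp (hm.const_mul (-t))) (C := Real.exp (|t|)) fun ω => by
      simp only [Function.comp_apply, Real.norm_eq_abs, abs_of_pos (Real.exp_pos _)]
      apply Real.exp_le_exp.2
      rcases abs_cases t with ⟨h, _⟩ | ⟨h, _⟩ <;> nlinarith [(hb ω).1, (hb ω).2]
  have hpt : ∀ ω, Real.exp (-t * Y ω) ≤ 1 - (1 - Real.exp (-t)) * Y ω := by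
    intro ω
    obtain ⟨h0, h1⟩ := hb ω
    have hc := convexOn_exp.2 (Set.mem_univ (0:ℝ)) (Set.mem_univ (-t))
      (by linarith : (0:ℝ) ≤ 1 - Y ω) h0 (by ring)
    simp only [smul_eq_mul, mul_zero, zero_add, Real.exp_zero, mul_one] at hc
    calc Real.exp (-t * Y ω) = Real.exp (Y ω * -t) := by ring_nf
      _ ≤ (1 - Y ω) + Y ω * Real.exp (-t) := hc
      _ = 1 - (1 - Real.exp (-t)) * Y ω := by ring
  have h1 : ∫ ω, Real.exp (-t * Y ω) ∂P ≤ ∫ ω, (1 - (1 - Real.exp (-t)) * Y ω) ∂P :=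
    integral_mono hEint ((integrable_const 1).sub (hYint.const_mul _)) hpt
  have h2 : ∫ ω, (1 - (1 - Real.exp (-t)) * Y ω) ∂P
      = 1 - (1 - Real.exp (-t)) * ∫ ω, Y ω ∂P := by
    rw [integral_sub (integrable_const 1) (hYint.const_mul _), integral_const,
      integral_const_mul]
    simp
  have h3 := Real.add_one_le_exp (-(1 - Real.exp (-t)) * ∫ ω, Y ω ∂P)
  linarith

/-- lower-tail Chernoff bound for negatively associated random variables
with values in [0,1]: Pr[X ≤ μ(1−δ)] ≤ exp(−μδ²/2), where X = Σ X_i and μ = E[X]. -/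
theorem chernoff_negatively_associated
    {Ω : Type*} [MeasurableSpace Ω] (P : Measure Ω) [IsProbabilityMeasure P]
    {n : ℕ} (X : Fin n → Ω → ℝ)
    (hmeas : ∀ i, Measurable (X i))
    (hbdd : ∀ i, ∀ ω, X i ω ∈ Set.Icc (0 : ℝ) 1)
    (hNA : NegAssoc P X)
    (δ : ℝ) (hδ0 : 0 < δ) (hδ1 : δ < 1) :
    (P {ω | ∑ i, X i ω ≤ (∫ ω, ∑ i, X i ω ∂P) * (1 - δ)}).toReal ≤
      Real.exp (-(∫ ω, ∑ i, X i ω ∂P) * δ ^ 2 / 2) := by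
  set m : ℝ := ∫ ω, ∑ i, X i ω ∂P with hm
  have hXint : ∀ i, Integrable (X i) P := fun i =>
    aux_int_bdd P (hmeas i) (C := 1) fun ω => by
      rw [Real.norm_eq_abs, abs_of_nonneg (hbdd i ω).1]; exact (hbdd i ω).2
  have hm_eq : m = ∑ i, ∫ ω, X i ω ∂P := integral_finset_sum Finset.univ fun i _ => hXint i
  have hm0 : 0 ≤ m := integral_nonneg fun ω => Finset.sum_nonneg fun i _ => (hbdd i ω).1
  set t : ℝ := -Real.log (1 - δ) with htdef
  have ht : 0 < t := by
    have h := Real.log_neg (x := 1 - δ) (by linarith) (by linarith)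
    simp only [htdef]; linarith
  have het : Real.exp (-t) = 1 - δ := by
    rw [htdef, neg_neg]; exact Real.exp_log (by linarith)
  set E : Ω → ℝ := fun ω => Real.exp (-t * ∑ i, X i ω) with hE
  have hEmeas : Measurable E :=
    Real.measurable_exp.comp ((Finset.measurable_sum Finset.univ fun i _ => hmeas i).const_mul (-t))
  have hEint : Integrable E P := aux_int_bdd P hEmeas (C := 1) fun ω => by
    simp only [hE, Real.norm_eq_abs, abs_of_pos (Real.exp_pos _), Real.exp_le_one_iff]
    have : 0 ≤ ∑ i, X i ω := Finset.sum_nonneg fun i _ => (hbdd i ω).1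
    nlinarith
  have hset : {ω | ∑ i, X i ω ≤ m * (1 - δ)}
      = {ω | Real.exp (-t * (m * (1 - δ))) ≤ E ω} := by
    ext ω
    simp only [Set.mem_setOf_eq, hE, Real.exp_le_exp]
    constructor <;> intro h <;> nlinarith
  have markov := mul_meas_ge_le_integral_of_nonneg
    (ae_of_all P fun ω => (Real.exp_pos (-t * (∑ i, X i ω))).le) hEint
    (Real.exp (-t * (m * (1 - δ))))
  have hεmul : Real.exp (t * (m * (1 - δ))) * Real.exp (-t * (m * (1 - δ))) = 1 := by
    have hz : t * (m * (1 - δ)) + -t * (m * (1 - δ)) = 0 := by ring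
    rw [← Real.exp_add, hz, Real.exp_zero]
  have hPR : (P {ω | ∑ i, X i ω ≤ m * (1 - δ)}).toReal
      ≤ Real.exp (t * (m * (1 - δ))) * ∫ ω, E ω ∂P := by
    rw [hset]
    simp only [hE]
    rw [measureReal_def] at markov
    nlinarith [markov, hεmul, Real.exp_pos (t * (m * (1 - δ))),
      ENNReal.toReal_nonneg
        (a := P {x | Real.exp (-t * (m * (1 - δ))) ≤ Real.exp (-t * ∑ i, X i x)})]
  have hEprod : (fun ω => E ω) = fun ω => ∏ i, Real.exp (-t * X i ω) := by
    funext ω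
    simp only [hE]
    rw [Finset.mul_sum, Real.exp_sum]
  have hchain : ∫ ω, E ω ∂P ≤ Real.exp (-δ * m) := by
    calc ∫ ω, E ω ∂P = ∫ ω, ∏ i, Real.exp (-t * X i ω) ∂P := by rw [hEprod]
      _ ≤ ∏ i, ∫ ω, Real.exp (-t * X i ω) ∂P :=
          aux_prod_step P X hmeas hbdd hNA ht.le Finset.univ
      _ ≤ ∏ i, Real.exp (-(1 - Real.exp (-t)) * ∫ ω, X i ω ∂P) :=
          Finset.prod_le_prod (fun i _ => integral_nonneg fun ω => (Real.exp_pos _).le)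
            (fun i _ => aux_single P (hmeas i) (hbdd i))
      _ = Real.exp (∑ i, -(1 - Real.exp (-t)) * ∫ ω, X i ω ∂P) := (Real.exp_sum _ _).symm
      _ = Real.exp (-δ * m) := by
          rw [het, hm_eq, ← Finset.mul_sum]
          ring_nf
  have hfinal : Real.exp (t * (m * (1 - δ))) * Real.exp (-δ * m) ≤ Real.exp (-m * δ ^ 2 / 2) := by
    rw [← Real.exp_add, Real.exp_le_exp]
    have hlog := aux_log_ineq hδ0.le hδ1
    rw [← htdef] at hlog
    have := mul_le_mul_of_nonneg_left hlog hm0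
    nlinarith
  calc (P {ω | ∑ i, X i ω ≤ m * (1 - δ)}).toReal
      ≤ Real.exp (t * (m * (1 - δ))) * ∫ ω, E ω ∂P := hPR
    _ ≤ Real.exp (t * (m * (1 - δ))) * Real.exp (-δ * m) :=
        mul_le_mul_of_nonneg_left hchain (Real.exp_pos _).le
    _ ≤ Real.exp (-m * δ ^ 2 / 2) := hfinal
end
end

section
/- With the setup of the bipartification step: let H ⊆ φ(G) have bounded edge-degree β, M* a matching of G_S, G̃ the bipartite subgraph from the bipartification lemma with parameter δ = λ/2 and degree bound d = β, H̃ = H ∩ φ(G̃), and Ũ = U ∩ φ(M*) where U consists of underfull edges (those with deg_H(u)+deg_H(v) < β(1−λ)). Assume λβ ≥ 2. Then H̃ ∪ Ũ is a (β', λ')-EDCS of H̃ ∪ φ(M*) with β' = β/2 + βλ + 2 and λ' = 8λ. -/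
open scoped Classical BigOperators

noncomputable section

variable {V : Type*}

/-- in the bipartification setup (H of bounded edge-degree β; every edge
of U has edge-degree ≤ (1−λ)β in H; every edge of φ(M*) \ U has edge-degree > (1−λ)β
in H; H̃ ⊆ H with |deg_{H̃}(v) − deg_H(v)/2| ≤ (λ/2)β for all v; φ(M*) a matching;
λβ ≥ 2), the graph H̃ ∪ Ũ with Ũ = U ∩ φ(M*) is a (β',λ')-EDCS of H̃ ∪ φ(M*), where
β' = β/2 + βλ + 2 and λ' = 8λ. -/
theorem bipartified_edcs
    {α : Type*} (β lam : ℝ) (hlam : 0 < lam) (hlb : lam * β ≥ 2)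
    (H Ht U Mphi : Finset (Sym2 α))
    (hHt : Ht ⊆ H)
    (hbdd : ∀ e ∈ H, (degSum H e : ℝ) ≤ β)
    (hU : ∀ e ∈ U, (degSum H e : ℝ) ≤ (1 - lam) * β)
    (hMU : ∀ e ∈ Mphi, e ∉ U → (degSum H e : ℝ) > (1 - lam) * β)
    (hMphi : IsMatching Mphi)
    (hdeg : ∀ v : α, |((deg Ht v : ℝ)) - (deg H v : ℝ) / 2| ≤ (lam / 2) * β) :
    (∀ e ∈ Ht ∪ (U ∩ Mphi),
        (degSum (Ht ∪ (U ∩ Mphi)) e : ℝ) ≤ β / 2 + β * lam + 2) ∧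
    (∀ e ∈ Ht ∪ Mphi, e ∉ Ht ∪ (U ∩ Mphi) →
        (degSum (Ht ∪ (U ∩ Mphi)) e : ℝ) ≥ (β / 2 + β * lam + 2) * (1 - 8 * lam)) := by
  have hb0 : (0:ℝ) < β := by nlinarith
  set X := Ht ∪ (U ∩ Mphi) with hX
  -- degree in the matching part is at most 1
  have hdegM : ∀ v, deg Mphi v ≤ 1 := by
    intro v
    apply Finset.card_le_one.mpr
    intro e he f hf
    simp only [Finset.mem_filter] at he hf
    by_contra hne
    exact hMphi.2 e he.1 f hf.1 hne v he.2 hf.2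
  have hdegUM : ∀ v, deg (U ∩ Mphi) v ≤ 1 := fun v =>
    le_trans (Finset.card_le_card
      (Finset.filter_subset_filter _ Finset.inter_subset_right)) (hdegM v)
  have hdegX_le : ∀ v, (deg X v : ℝ) ≤ (deg Ht v : ℝ) + 1 := by
    intro v
    have h1 : deg X v ≤ deg Ht v + deg (U ∩ Mphi) v := by
      unfold deg
      rw [hX, Finset.filter_union]
      exact Finset.card_union_le _ _
    have h2 := hdegUM v
    have : deg X v ≤ deg Ht v + 1 := le_trans h1 (by omega)
    exact_mod_cast this
  have hdegX_ge : ∀ v, (deg Ht v : ℝ) ≤ (deg X v : ℝ) := by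
    intro v
    exact_mod_cast Finset.card_le_card
      (Finset.filter_subset_filter _ Finset.subset_union_left)
  have hdegHt_le : ∀ v, (deg Ht v:ℝ) ≤ (deg H v:ℝ)/2 + lam/2*β := by
    intro v
    have := abs_le.mp (hdeg v)
    linarith [this.2]
  have hdegHt_ge : ∀ v, (deg H v:ℝ)/2 - lam/2*β ≤ (deg Ht v:ℝ) := by
    intro v
    have := abs_le.mp (hdeg v)
    linarith [this.1]
  -- edge-degree bounds
  have hsum_le : ∀ e : Sym2 α, (degSum X e : ℝ) ≤ (degSum H e : ℝ)/2 + lam*β + 2 := by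
    intro e
    unfold degSum
    push_cast
    have h1 := hdegX_le e.out.1
    have h2 := hdegX_le e.out.2
    have h3 := hdegHt_le e.out.1
    have h4 := hdegHt_le e.out.2
    linarith
  have hsum_ge : ∀ e : Sym2 α, (degSum H e : ℝ)/2 - lam*β ≤ (degSum X e : ℝ) := by
    intro e
    unfold degSum
    push_cast
    have h1 := hdegX_ge e.out.1
    have h2 := hdegX_ge e.out.2
    have h3 := hdegHt_ge e.out.1
    have h4 := hdegHt_ge e.out.2
    linarith
  constructor
  · intro e he
    have hHe : (degSum H e : ℝ) ≤ β := by
      rcases Finset.mem_union.mp he with h | h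
      · exact hbdd e (hHt h)
      · have := hU e (Finset.mem_inter.mp h).1
        nlinarith
    have := hsum_le e
    linarith
  · intro e he heX
    have heM : e ∈ Mphi := by
      rcases Finset.mem_union.mp he with h | h
      · exact absurd (Finset.mem_union_left _ h) heX
      · exact h
    have heU : e ∉ U := by
      intro hU'
      exact heX (Finset.mem_union_right _ (Finset.mem_inter.mpr ⟨hU', heM⟩))
    have hgt := hMU e heM heU
    have := hsum_ge e
    nlinarith [sq_nonneg lam, mul_pos hlam hb0, mul_nonneg (mul_nonneg hlam.le hlam.le) hb0.le]
end
end

section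
/- Let M* be a matching and let M' ⊆ M* be a random matching that includes each edge of M* independently with probability p. For a vertex u covered by edge e* ∈ M*, conditioned on e* ∉ M', define ŷ on edges incident to u by: ŷ_{e*} = x_{e*}; for any other edge e ∋ u, ŷ_e = (1−p)x_e/p_e if e is not adjacent to M' (which happens with probability p_e/(1−p)) and ŷ_e = 0 otherwise, where p_e is the unconditional probability that e is not adjacent to M' (p_e = (1−p) if e has exactly one endpoint matched by M*, p_e = (1−p)² if both endpoints are matched). Then E[Σ_{e∋u} w_e ŷ_e | e* ∉ M'] = Σ_{e∋u} w_e x_e, and unconditionally E[Σ_{e∋u} w_e ŷ_e] = p·w_{e*} + (1−p)·Σ_{e∋u} w_e x_e. For u not covered by M*, E[Σ_{e∋u} w_e ŷ_e] = (1−p)·Σ_{e∋u} w_e x_e. -/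
open scoped Classical BigOperators

noncomputable section

variable {V : Type*}

open MeasureTheory ProbabilityTheory


section YhatHelpers

lemma yhat_bern_integral {p : ℝ} (hp0 : 0 ≤ p) (hp1 : ENNReal.ofReal p ≤ 1) (g : Bool → ℝ) :
    ∫ b, g b ∂((PMF.bernoulli (Real.toNNReal p) (ENNReal.coe_le_one_iff.mp hp1)).toMeasure)
      = p * g true + (1 - p) * g false := by
  have hp1' : p ≤ 1 := ENNReal.ofReal_le_one.mp hp1
  rw [PMF.integral_eq_sum, Fintype.sum_bool]
  simp only [PMF.bernoulli_apply, Bool.cond_true, Bool.cond_false]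
  have h2 : Real.toNNReal p ≤ 1 := ENNReal.coe_le_one_iff.mp hp1
  simp only [ENNReal.coe_toReal, NNReal.coe_sub h2, Real.coe_toNNReal _ hp0, NNReal.coe_one,
    smul_eq_mul]

lemma yhat_pi_integral_prod {ι : Type*} [Fintype ι] (ν : Measure Bool) [IsProbabilityMeasure ν]
    (g : ι → Bool → ℝ) :
    ∫ ω : ι → Bool, ∏ i, g i (ω i) ∂(Measure.pi fun _ => ν) = ∏ i, ∫ b, g i b ∂ν := by
  letI : MeasureSpace Bool := ⟨ν⟩
  haveI : SigmaFinite (volume : Measure Bool) := by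
    change SigmaFinite ν; infer_instance
  exact MeasureTheory.integral_fintype_prod_eq_prod g

lemma yhat_indicator_integral {ι : Type*} [Fintype ι] {p : ℝ} (hp0 : 0 ≤ p)
    (hp1 : ENNReal.ofReal p ≤ 1) (S : Finset ι) (c : ℝ) (f : (ι → Bool) → ℝ)
    (hf : ∀ ω, f ω = if ∀ i ∈ S, ω i = false then c else 0) :
    ∫ ω : ι → Bool, f ω
      ∂(Measure.pi fun _ => (PMF.bernoulli (Real.toNNReal p) (ENNReal.coe_le_one_iff.mp hp1)).toMeasure)
      = (1 - p) ^ S.card * c := by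
  simp only [hf]
  have hp1' : p ≤ 1 := ENNReal.ofReal_le_one.mp hp1
  have key : ∀ ω : ι → Bool, (if ∀ i ∈ S, ω i = false then c else 0)
      = (∏ i, (if i ∈ S then (if ω i then (0:ℝ) else 1) else 1)) * c := by
    intro ω
    by_cases h : ∀ i ∈ S, ω i = false
    · rw [if_pos h]
      have : ∀ i : ι, (if i ∈ S then (if ω i then (0:ℝ) else 1) else 1) = 1 := by
        intro i
        by_cases hi : i ∈ S
        · simp [hi, h i hi]
        · simp [hi]
      simp [this]
    · rw [if_neg h]
      push_neg at h
      obtain ⟨i, hiS, hi⟩ := h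
      have hit : ω i = true := by cases hω : ω i with
        | false => exact absurd hω hi
        | true => rfl
      have : (∏ i, (if i ∈ S then (if ω i then (0:ℝ) else 1) else 1)) = 0 :=
        Finset.prod_eq_zero (Finset.mem_univ i) (by simp [hiS, hit])
      rw [this, zero_mul]
  simp only [key]
  rw [MeasureTheory.integral_mul_const,
    yhat_pi_integral_prod _ (fun i b => if i ∈ S then (if b then (0:ℝ) else 1) else 1)]
  congr 1
  have : ∀ i : ι, (∫ b, (if i ∈ S then (if b then (0:ℝ) else 1) else 1)
      ∂((PMF.bernoulli (Real.toNNReal p) (ENNReal.coe_le_one_iff.mp hp1)).toMeasure))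
      = (if i ∈ S then 1 - p else 1) := by
    intro i
    rw [yhat_bern_integral hp0 hp1]
    by_cases hi : i ∈ S <;> simp [hi]
  rw [Finset.prod_congr rfl (fun i _ => this i), Finset.prod_ite_mem, Finset.univ_inter,
    Finset.prod_const]

lemma yhat_ite_integral {ι : Type*} [Fintype ι] {p : ℝ} (hp0 : 0 ≤ p)
    (hp1 : ENNReal.ofReal p ≤ 1) (S : Finset ι) (c₁ c₂ : ℝ) (f : (ι → Bool) → ℝ)
    (hf : ∀ ω, f ω = if ∀ i ∈ S, ω i = false then c₁ else c₂) :
    ∫ ω : ι → Bool, f ω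
      ∂(Measure.pi fun _ => (PMF.bernoulli (Real.toNNReal p) (ENNReal.coe_le_one_iff.mp hp1)).toMeasure)
      = (1 - p) ^ S.card * (c₁ - c₂) + c₂ := by
  simp only [hf]
  have key : ∀ ω : ι → Bool, (if ∀ i ∈ S, ω i = false then c₁ else c₂)
      = (if ∀ i ∈ S, ω i = false then c₁ - c₂ else 0) + c₂ := by
    intro ω; split <;> ring
  simp only [key]
  rw [MeasureTheory.integral_add (Integrable.of_finite) (integrable_const _),
    yhat_indicator_integral hp0 hp1 S (c₁ - c₂) _ (fun ω => rfl), integral_const]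
  simp

lemma yhat_ite_inst {α : Sort*} {P : Prop} {i1 i2 : Decidable P} (a b : α) :
    @ite _ P i1 a b = @ite _ P i2 a b := by
  cases Subsingleton.elim i1 i2; rfl

end YhatHelpers

/-- expectation identities for the random assignment ŷ built from a
random submatching M' of a fixed matching M* (each edge of M* kept independently with
probability p).  For a vertex u covered by e* ∈ M*:
E[Σ_{e∋u} w_e ŷ_e | e* ∉ M'] = Σ_{e∋u} w_e x_e and
E[Σ_{e∋u} w_e ŷ_e] = p·w_{e*} + (1−p)·Σ_{e∋u} w_e x_e;
for u not covered by M*: E[Σ_{e∋u} w_e ŷ_e] = (1−p)·Σ_{e∋u} w_e x_e. -/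
theorem yhat_vertex_expectations
    (G : Finset (Sym2 V)) (hG : ∀ e ∈ G, ¬ e.IsDiag)
    (Mstar : Finset (Sym2 V)) (hMG : Mstar ⊆ G) (hMm : IsMatching Mstar)
    (p : ℝ) (hp0 : 0 < p) (hp : p ≤ 1/2) (hp1 : ENNReal.ofReal p ≤ 1)
    (w x : Sym2 V → ℝ)
    (P : Measure ({e // e ∈ Mstar} → Bool))
    (hP : P = Measure.pi fun _ => (PMF.bernoulli (Real.toNNReal p) (ENNReal.coe_le_one_iff.mp hp1)).toMeasure)
    (M' : ({e // e ∈ Mstar} → Bool) → Finset (Sym2 V))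
    (hM' : ∀ ω, M' ω = Mstar.filter fun e => ∀ h : e ∈ Mstar, ω ⟨e, h⟩ = true)
    (cov : V → Prop) (hcov : ∀ u, cov u ↔ ∃ f ∈ Mstar, u ∈ f)
    (pe : Sym2 V → ℝ)
    (hpe : ∀ e : Sym2 V, pe e =
      (1 - p) ^ ((if cov e.out.1 then 1 else 0) + (if cov e.out.2 then 1 else 0)))
    (yhat : ({e // e ∈ Mstar} → Bool) → Sym2 V → ℝ)
    (hyhat : ∀ ω e, yhat ω e =
      if e ∈ M' ω then 1
      else if e ∈ Mstar then x e
      else if ∃ f ∈ M' ω, ∃ v, v ∈ e ∧ v ∈ f then 0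
      else (1 - p) * x e / pe e) :
    (∀ u : V, ∀ estar ∈ Mstar, u ∈ estar →
      (∫ ω, (∑ e ∈ G.filter fun e => u ∈ e, w e * yhat ω e)
          ∂(ProbabilityTheory.cond P {ω | estar ∉ M' ω}) =
        ∑ e ∈ G.filter fun e => u ∈ e, w e * x e) ∧
      (∫ ω, (∑ e ∈ G.filter fun e => u ∈ e, w e * yhat ω e) ∂P =
        p * w estar + (1 - p) * ∑ e ∈ G.filter fun e => u ∈ e, w e * x e)) ∧
    (∀ u : V, ¬ cov u →
      ∫ ω, (∑ e ∈ G.filter fun e => u ∈ e, w e * yhat ω e) ∂P =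
        (1 - p) * ∑ e ∈ G.filter fun e => u ∈ e, w e * x e) := by
  subst hP
  have hp0' : (0:ℝ) ≤ p := le_of_lt hp0
  have hp1' : p ≤ 1 := ENNReal.ofReal_le_one.mp hp1
  have h1p : (0:ℝ) < 1 - p := by linarith
  have hMem : ∀ (ω : {e // e ∈ Mstar} → Bool) (f : Sym2 V) (hf : f ∈ Mstar),
      (f ∈ M' ω ↔ ω ⟨f, hf⟩ = true) := by
    intro ω f hf
    rw [hM', Finset.mem_filter]
    exact ⟨fun h => h.2 hf, fun h => ⟨hf, fun _ => h⟩⟩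
  have hNot : ∀ (ω : {e // e ∈ Mstar} → Bool) (f : Sym2 V), f ∉ Mstar → f ∉ M' ω := by
    intro ω f h hmem
    rw [hM', Finset.mem_filter] at hmem
    exact h hmem.1
  set S : Sym2 V → Finset {e // e ∈ Mstar} :=
    fun e => Finset.univ.filter (fun i => ∃ v, v ∈ e ∧ v ∈ (i : Sym2 V)) with hS
  have hSmem : ∀ (e : Sym2 V) (i : {e // e ∈ Mstar}),
      i ∈ S e ↔ ∃ v, v ∈ e ∧ v ∈ (i : Sym2 V) := by
    intro e i; simp [hS]
  have yform : ∀ ω (e : Sym2 V), e ∉ Mstar →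
      yhat ω e = if ∀ i ∈ S e, ω i = false then (1 - p) * x e / pe e else 0 := by
    intro ω e he
    rw [hyhat, if_neg (hNot ω e he), if_neg he]
    by_cases h : ∀ i ∈ S e, ω i = false
    · rw [if_pos h, if_neg]
      rintro ⟨f, hfM', v, hv, hvf⟩
      have hfM : f ∈ Mstar := by
        rw [hM', Finset.mem_filter] at hfM'; exact hfM'.1
      have hiS : (⟨f, hfM⟩ : {e // e ∈ Mstar}) ∈ S e := (hSmem e _).mpr ⟨v, hv, hvf⟩
      have h1 := h _ hiS
      have h2 := (hMem ω f hfM).mp hfM'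
      rw [h2] at h1
      simp at h1
    · rw [if_neg h, if_pos]
      push_neg at h
      obtain ⟨i, hiS, hi⟩ := h
      have hit : ω i = true := by
        cases hω : ω i with
        | false => exact absurd hω hi
        | true => rfl
      obtain ⟨v, hv, hvi⟩ := (hSmem e i).mp hiS
      exact ⟨(i : Sym2 V), (hMem ω (i : Sym2 V) i.2).mpr hit, v, hv, hvi⟩
  have cardS : ∀ e ∈ G, e ∉ Mstar → pe e = (1 - p) ^ (S e).card := by
    intro e heG heM
    rw [hpe]
    congr 1
    have he : s(e.out.1, e.out.2) = e := Quot.out_eq e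
    set a := e.out.1 with ha
    set b := e.out.2 with hb
    have hab : a ≠ b := by
      intro h
      exact hG e heG (by rw [← he, Sym2.mk_isDiag_iff]; exact h)
    have hmemiff : ∀ v : V, v ∈ e ↔ v = a ∨ v = b := by
      intro v; rw [← he, Sym2.mem_iff]
    have hcard1 : ∀ c : V,
        (Finset.univ.filter fun i : {e // e ∈ Mstar} => c ∈ (i : Sym2 V)).card
          = if cov c then 1 else 0 := by
      intro c
      by_cases hc : cov c
      · obtain ⟨f, hfM, hcf⟩ := (hcov c).mp hc
        rw [if_pos hc]
        have hsing : (Finset.univ.filter fun i : {e // e ∈ Mstar} => c ∈ (i : Sym2 V))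
            = {⟨f, hfM⟩} := by
          ext i
          simp only [Finset.mem_filter, Finset.mem_univ, true_and, Finset.mem_singleton]
          constructor
          · intro hci
            by_contra hne
            have hne' : f ≠ (i : Sym2 V) := by
              intro hfe; exact hne (Subtype.ext hfe.symm)
            exact (hMm.2 f hfM (i : Sym2 V) i.2 hne' c hcf) hci
          · rintro rfl; exact hcf
        rw [hsing, Finset.card_singleton]
      · rw [if_neg hc, Finset.card_eq_zero, Finset.filter_eq_empty_iff]
        intro i _
        exact fun hci => hc ((hcov c).mpr ⟨(i : Sym2 V), i.2, hci⟩)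
    have hSeq : S e = (Finset.univ.filter fun i : {e // e ∈ Mstar} => a ∈ (i : Sym2 V))
        ∪ (Finset.univ.filter fun i : {e // e ∈ Mstar} => b ∈ (i : Sym2 V)) := by
      ext i
      simp only [hSmem, Finset.mem_union, Finset.mem_filter, Finset.mem_univ, true_and]
      constructor
      · rintro ⟨v, hv, hvi⟩
        rcases (hmemiff v).mp hv with rfl | rfl
        · exact Or.inl hvi
        · exact Or.inr hvi
      · rintro (h | h)
        · exact ⟨a, (hmemiff a).mpr (Or.inl rfl), h⟩
        · exact ⟨b, (hmemiff b).mpr (Or.inr rfl), h⟩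
    have hdisj : Disjoint
        (Finset.univ.filter fun i : {e // e ∈ Mstar} => a ∈ (i : Sym2 V))
        (Finset.univ.filter fun i : {e // e ∈ Mstar} => b ∈ (i : Sym2 V)) := by
      rw [Finset.disjoint_left]
      intro i hia hib
      simp only [Finset.mem_filter, Finset.mem_univ, true_and] at hia hib
      have hie : (i : Sym2 V) = s(a, b) := (Sym2.mem_and_mem_iff hab).mp ⟨hia, hib⟩
      have hiM : (i : Sym2 V) ∈ Mstar := i.2
      rw [hie, he] at hiM
      exact heM hiM
    rw [hSeq, Finset.card_union_of_disjoint hdisj, hcard1 a, hcard1 b]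
  have int_other : ∀ e ∈ G, e ∉ Mstar →
      ∫ ω, yhat ω e ∂(Measure.pi fun _ : {e // e ∈ Mstar} =>
        (PMF.bernoulli (Real.toNNReal p) (ENNReal.coe_le_one_iff.mp hp1)).toMeasure) = (1 - p) * x e := by
    intro e heG heM
    refine (yhat_indicator_integral hp0' hp1 (S e) ((1 - p) * x e / pe e)
      (fun ω => yhat ω e) (fun ω => by
        show yhat ω e = _
        rw [yform ω e heM]; exact yhat_ite_inst _ _)).trans ?_
    rw [cardS e heG heM]
    have hne : ((1:ℝ) - p) ^ (S e).card ≠ 0 := pow_ne_zero _ (by linarith)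
    field_simp
  have int_star : ∀ (estar : Sym2 V) (hestar : estar ∈ Mstar),
      ∫ ω, yhat ω estar ∂(Measure.pi fun _ : {e // e ∈ Mstar} =>
        (PMF.bernoulli (Real.toNNReal p) (ENNReal.coe_le_one_iff.mp hp1)).toMeasure) = p + (1 - p) * x estar := by
    intro estar hestar
    refine (yhat_ite_integral hp0' hp1 ({⟨estar, hestar⟩} : Finset {e // e ∈ Mstar})
      (x estar) 1 (fun ω => yhat ω estar) (fun ω => ?_)).trans ?_
    · show yhat ω estar = _
      rw [hyhat]
      by_cases h : ω ⟨estar, hestar⟩ = true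
      · have h1 : estar ∈ M' ω := (hMem ω estar hestar).mpr h
        have hcond : ¬ ∀ i ∈ ({⟨estar, hestar⟩} : Finset {e // e ∈ Mstar}), ω i = false := by
          intro hall
          have := hall _ (Finset.mem_singleton_self _)
          rw [h] at this
          simp at this
        rw [if_pos h1, if_neg hcond]
      · have hfe : ω ⟨estar, hestar⟩ = false := by
          cases hω : ω ⟨estar, hestar⟩ with
          | false => rfl
          | true => exact absurd hω h
        have h1 : estar ∉ M' ω := fun hm => h ((hMem ω estar hestar).mp hm)
        have hcond : ∀ i ∈ ({⟨estar, hestar⟩} : Finset {e // e ∈ Mstar}), ω i = false := by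
          intro i hi
          rw [Finset.mem_singleton.mp hi]
          exact hfe
        rw [if_neg h1, if_pos hestar, if_pos hcond]
    · rw [Finset.card_singleton, pow_one]
      ring
  refine ⟨?_, ?_⟩
  · intro u estar hestar hu
    have hestarF : estar ∈ G.filter (fun e => u ∈ e) :=
      Finset.mem_filter.mpr ⟨hMG hestar, hu⟩
    have hFnot : ∀ e ∈ G.filter (fun e => u ∈ e), e ≠ estar → e ∉ Mstar := by
      intro e heF hne heM
      exact (hMm.2 estar hestar e heM (fun h => hne h.symm) u hu)
        (Finset.mem_filter.mp heF).2
    have hAmem : ∀ ω : {e // e ∈ Mstar} → Bool,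
        (ω ∈ {ω | estar ∉ M' ω}) ↔ ω ⟨estar, hestar⟩ = false := by
      intro ω
      constructor
      · intro h
        cases hω : ω ⟨estar, hestar⟩ with
        | false => rfl
        | true => exact absurd ((hMem ω estar hestar).mpr hω) h
      · intro h hm
        rw [(hMem ω estar hestar).mp hm] at h
        simp at h
    have hAmeas : MeasurableSet {ω : {e // e ∈ Mstar} → Bool | estar ∉ M' ω} := by
      have hset : {ω : {e // e ∈ Mstar} → Bool | estar ∉ M' ω}
          = (fun ω : {e // e ∈ Mstar} → Bool => ω ⟨estar, hestar⟩) ⁻¹' {false} := by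
        ext ω; simpa using hAmem ω
      rw [hset]
      exact (measurable_pi_apply _) (measurableSet_singleton false)
    have single_iff : ∀ (ω : {e // e ∈ Mstar} → Bool),
        (∀ i ∈ ({⟨estar, hestar⟩} : Finset {e // e ∈ Mstar}), ω i = false)
          ↔ ω ⟨estar, hestar⟩ = false := by
      intro ω; simp
    have hPA : ((Measure.pi fun _ : {e // e ∈ Mstar} =>
        (PMF.bernoulli (Real.toNNReal p) (ENNReal.coe_le_one_iff.mp hp1)).toMeasure)
          {ω | estar ∉ M' ω}).toReal = 1 - p := by
      have h4 : ∫ ω, Set.indicator {ω | estar ∉ M' ω} (fun _ => (1:ℝ)) ω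
          ∂(Measure.pi fun _ : {e // e ∈ Mstar} =>
            (PMF.bernoulli (Real.toNNReal p) (ENNReal.coe_le_one_iff.mp hp1)).toMeasure) = 1 - p := by
        refine (yhat_indicator_integral hp0' hp1
          ({⟨estar, hestar⟩} : Finset {e // e ∈ Mstar}) (1:ℝ) _ (fun ω => ?_)).trans ?_
        · show Set.indicator {ω | estar ∉ M' ω} (fun _ => (1:ℝ)) ω = _
          rw [Set.indicator_apply]
          by_cases h : ω ⟨estar, hestar⟩ = false
          · rw [if_pos ((hAmem ω).mpr h), if_pos ((single_iff ω).mpr h)]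
          · rw [if_neg (fun hm => h ((hAmem ω).mp hm)),
              if_neg (fun hall => h ((single_iff ω).mp hall))]
        · rw [Finset.card_singleton, pow_one, mul_one]
      rw [← h4, MeasureTheory.integral_indicator_const (1:ℝ) hAmeas, smul_eq_mul, mul_one]
      rfl
    have condEq : ∀ f : ({e // e ∈ Mstar} → Bool) → ℝ,
        ∫ ω, f ω ∂(ProbabilityTheory.cond (Measure.pi fun _ : {e // e ∈ Mstar} =>
            (PMF.bernoulli (Real.toNNReal p) (ENNReal.coe_le_one_iff.mp hp1)).toMeasure) {ω | estar ∉ M' ω})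
          = (1 - p)⁻¹ * ∫ ω, (if ω ⟨estar, hestar⟩ = false then f ω else 0)
              ∂(Measure.pi fun _ : {e // e ∈ Mstar} =>
                (PMF.bernoulli (Real.toNNReal p) (ENNReal.coe_le_one_iff.mp hp1)).toMeasure) := by
      intro f
      rw [ProbabilityTheory.cond, MeasureTheory.integral_smul_measure,
        ← MeasureTheory.integral_indicator hAmeas, ENNReal.toReal_inv, hPA, smul_eq_mul]
      refine congrArg (fun t => (1 - p)⁻¹ * t) ?_
      refine MeasureTheory.integral_congr_ae (MeasureTheory.ae_of_all _ fun ω => ?_)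
      show Set.indicator {ω | estar ∉ M' ω} f ω = if ω ⟨estar, hestar⟩ = false then f ω else 0
      rw [Set.indicator_apply]
      by_cases h : ω ⟨estar, hestar⟩ = false
      · rw [if_pos ((hAmem ω).mpr h), if_pos h]
      · rw [if_neg (fun hm => h ((hAmem ω).mp hm)), if_neg h]
    have condint_star : ∫ ω, (if ω ⟨estar, hestar⟩ = false then yhat ω estar else 0)
        ∂(Measure.pi fun _ : {e // e ∈ Mstar} =>
          (PMF.bernoulli (Real.toNNReal p) (ENNReal.coe_le_one_iff.mp hp1)).toMeasure) = (1 - p) * x estar := by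
      refine (yhat_indicator_integral hp0' hp1
        ({⟨estar, hestar⟩} : Finset {e // e ∈ Mstar}) (x estar)
        (fun ω => if ω ⟨estar, hestar⟩ = false then yhat ω estar else 0)
        (fun ω => ?_)).trans ?_
      · show (if ω ⟨estar, hestar⟩ = false then yhat ω estar else 0) = _
        by_cases h : ω ⟨estar, hestar⟩ = false
        · rw [if_pos h, if_pos ((single_iff ω).mpr h), hyhat, if_neg, if_pos hestar]
          intro hm
          rw [(hMem ω estar hestar).mp hm] at h
          simp at h
        · rw [if_neg h, if_neg (fun hall => h ((single_iff ω).mp hall))]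
      · rw [Finset.card_singleton, pow_one]
    have condint_other : ∀ e ∈ G.filter (fun e => u ∈ e), e ∉ Mstar →
        ∫ ω, (if ω ⟨estar, hestar⟩ = false then yhat ω e else 0)
          ∂(Measure.pi fun _ : {e // e ∈ Mstar} =>
            (PMF.bernoulli (Real.toNNReal p) (ENNReal.coe_le_one_iff.mp hp1)).toMeasure) = (1 - p) * x e := by
      intro e heF heM
      obtain ⟨heG, hue⟩ := Finset.mem_filter.mp heF
      have hi0S : (⟨estar, hestar⟩ : {e // e ∈ Mstar}) ∈ S e :=
        (hSmem e _).mpr ⟨u, hue, hu⟩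
      refine (yhat_indicator_integral hp0' hp1 (S e) ((1 - p) * x e / pe e)
        (fun ω => if ω ⟨estar, hestar⟩ = false then yhat ω e else 0)
        (fun ω => ?_)).trans ?_
      · show (if ω ⟨estar, hestar⟩ = false then yhat ω e else 0) = _
        by_cases h : ∀ i ∈ S e, ω i = false
        · rw [if_pos (h _ hi0S), yform ω e heM, if_pos h, if_pos h]
        · rw [if_neg h]
          by_cases h0 : ω ⟨estar, hestar⟩ = false
          · rw [if_pos h0, yform ω e heM, if_neg h]
          · rw [if_neg h0]
      · rw [cardS e heG heM]
        have hne : ((1:ℝ) - p) ^ (S e).card ≠ 0 := pow_ne_zero _ (by linarith)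
        field_simp
    constructor
    · rw [condEq]
      have hsum : ∀ ω : {e // e ∈ Mstar} → Bool,
          (if ω ⟨estar, hestar⟩ = false
              then ∑ e ∈ G.filter (fun e => u ∈ e), w e * yhat ω e else 0)
            = ∑ e ∈ G.filter (fun e => u ∈ e),
                w e * (if ω ⟨estar, hestar⟩ = false then yhat ω e else 0) := by
        intro ω
        by_cases h : ω ⟨estar, hestar⟩ = false <;> simp [h]
      simp only [hsum]
      rw [MeasureTheory.integral_finset_sum _ (fun e _ => Integrable.of_finite)]
      have hterm : ∀ e ∈ G.filter (fun e => u ∈ e),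
          (∫ ω, w e * (if ω ⟨estar, hestar⟩ = false then yhat ω e else 0)
            ∂(Measure.pi fun _ : {e // e ∈ Mstar} =>
              (PMF.bernoulli (Real.toNNReal p) (ENNReal.coe_le_one_iff.mp hp1)).toMeasure))
            = w e * ((1 - p) * x e) := by
        intro e heF
        rw [MeasureTheory.integral_const_mul]
        by_cases hee : e = estar
        · subst hee; rw [condint_star]
        · rw [condint_other e heF (hFnot e heF hee)]
      rw [Finset.sum_congr rfl hterm]
      have hfact : ∑ e ∈ G.filter (fun e => u ∈ e), w e * ((1 - p) * x e)
          = (1 - p) * ∑ e ∈ G.filter (fun e => u ∈ e), w e * x e := by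
        rw [Finset.mul_sum]; exact Finset.sum_congr rfl (fun e _ => by ring)
      rw [hfact, ← mul_assoc, inv_mul_cancel₀ (by linarith : (1:ℝ) - p ≠ 0), one_mul]
    · rw [MeasureTheory.integral_finset_sum _ (fun e _ => Integrable.of_finite)]
      have hterm : ∀ e ∈ G.filter (fun e => u ∈ e),
          (∫ ω, w e * yhat ω e ∂(Measure.pi fun _ : {e // e ∈ Mstar} =>
            (PMF.bernoulli (Real.toNNReal p) (ENNReal.coe_le_one_iff.mp hp1)).toMeasure))
            = (1 - p) * (w e * x e) + (if e = estar then p * w estar else 0) := by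
        intro e heF
        rw [MeasureTheory.integral_const_mul]
        by_cases hee : e = estar
        · subst hee
          rw [int_star e hestar, if_pos rfl]
          ring
        · rw [int_other e (Finset.mem_filter.mp heF).1 (hFnot e heF hee), if_neg hee]
          ring
      rw [Finset.sum_congr rfl hterm, Finset.sum_add_distrib, ← Finset.mul_sum,
        Finset.sum_ite_eq' _ estar (fun _ => p * w estar), if_pos hestarF]
      ring
  · intro u hcu
    have hFnotM : ∀ e ∈ G.filter (fun e => u ∈ e), e ∉ Mstar := by
      intro e heF heM
      exact hcu ((hcov u).mpr ⟨e, heM, (Finset.mem_filter.mp heF).2⟩)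
    rw [MeasureTheory.integral_finset_sum _ (fun e _ => Integrable.of_finite)]
    have hterm : ∀ e ∈ G.filter (fun e => u ∈ e),
        (∫ ω, w e * yhat ω e ∂(Measure.pi fun _ : {e // e ∈ Mstar} =>
          (PMF.bernoulli (Real.toNNReal p) (ENNReal.coe_le_one_iff.mp hp1)).toMeasure))
          = w e * ((1 - p) * x e) := by
      intro e heF
      rw [MeasureTheory.integral_const_mul,
        int_other e (Finset.mem_filter.mp heF).1 (hFnotM e heF)]
    rw [Finset.sum_congr rfl hterm, Finset.mul_sum]
    exact Finset.sum_congr rfl (fun e _ => by ring)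
end
end
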